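/- arXiv:2107.07995 — 5 statements merged into one kernel-verified Lean document; each statement's English description precedes it below -/
import Mathlib

section
/- Let f : [0,1] → ℝ be a strictly convex function. Let X be a collection of supporting tangent lines of f, i.e., lines y = ax + b such that there exists x₀ ∈ [0,1] with a·x₀ + b = f(x₀) and a·x + b < f(x) for all x ∈ [0,1] with x ≠ x₀. If the set of slopes {a : (y = ax+b) ∈ X} has Hausdorff dimension 0, then the union ⋃X (as a subset of ℝ²) has Hausdorff dimension at most 1. -/
open Set MeasureTheory

/-- The non-vertical line in `ℝ²` with slope `a` and intercept `b`. -/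
def lineAB (a b : ℝ) : Set (ℝ × ℝ) := {q : ℝ × ℝ | q.2 = a * q.1 + b}

/-- The line `y = a x + b` is a supporting tangent line of `f : [0,1] → ℝ`. -/
def IsSuppTangent (f : ℝ → ℝ) (a b : ℝ) : Prop :=
  ∃ x₀ ∈ Set.Icc (0 : ℝ) 1, a * x₀ + b = f x₀ ∧
    ∀ x ∈ Set.Icc (0 : ℝ) 1, x ≠ x₀ → a * x + b < f x

open EMetric Filter Topology
open scoped ENNReal NNReal

lemma exists_cover (A : Set ℝ) {s : ℝ} (hs : 0 < s) (h : μH[s] A = 0) (ε : ℝ≥0∞) (hε : 0 < ε) :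
    ∃ T : ℕ → Set ℝ, (A ⊆ ⋃ i, T i) ∧ (∀ i, diam (T i) ≤ ε) ∧ ∑' i, diam (T i) ^ s ≤ ε := by
  rw [Measure.hausdorffMeasure_apply] at h
  have h2 : (⨅ (t : ℕ → Set ℝ) (_ : A ⊆ ⋃ n, t n) (_ : ∀ n, diam (t n) ≤ ε),
      ∑' n, ⨆ _ : (t n).Nonempty, diam (t n) ^ s) = 0 := by
    refine le_antisymm ?_ zero_le
    calc _ ≤ _ := le_iSup₂ (f := fun r (_ : 0 < r) => ⨅ (t : ℕ → Set ℝ) (_ : A ⊆ ⋃ n, t n)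
          (_ : ∀ n, diam (t n) ≤ r), ∑' n, ⨆ _ : (t n).Nonempty, diam (t n) ^ s) ε hε
      _ = 0 := h
  have h3 : (⨅ (t : ℕ → Set ℝ) (_ : A ⊆ ⋃ n, t n) (_ : ∀ n, diam (t n) ≤ ε),
      ∑' n, ⨆ _ : (t n).Nonempty, diam (t n) ^ s) < ε := h2 ▸ hε
  rw [iInf_lt_iff] at h3
  obtain ⟨T, hT⟩ := h3
  rw [iInf_lt_iff] at hT
  obtain ⟨hTc, hT⟩ := hT
  rw [iInf_lt_iff] at hT
  obtain ⟨hTd, hT⟩ := hT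
  refine ⟨T, hTc, hTd, ?_⟩
  refine le_trans (ENNReal.tsum_le_tsum fun i => ?_) hT.le
  rcases (T i).eq_empty_or_nonempty with he | hne
  · simp [he, EMetric.diam, ENNReal.zero_rpow_of_pos hs]
  · simp [hne]

lemma prod_null (A : Set ℝ) {s : ℝ} (hs : 0 < s) (hs1 : s ≤ 1) (h : μH[s] A = 0) :
    μH[1 + s] (A ×ˢ Icc (0:ℝ) 1) = 0 := by
  refine le_antisymm ?_ zero_le
  choose T hTc hTd hTs using fun n : ℕ => exists_cover A hs h (2⁻¹ ^ n)
    (ENNReal.pow_pos (by norm_num) n)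
  have h2r : ∀ n : ℕ, ENNReal.ofReal ((2:ℝ)⁻¹ ^ n) = (2⁻¹:ℝ≥0∞) ^ n := fun n => by
    rw [ENNReal.ofReal_pow (by norm_num), ENNReal.ofReal_inv_of_pos (by norm_num),
      ENNReal.ofReal_ofNat]
  -- real diameters with a positive floor
  set η : ℕ → ℕ → ℝ := fun n i => ((2:ℝ)⁻¹ ^ (n + i + 1)) ^ s⁻¹ with hη
  set D : ℕ → ℕ → ℝ := fun n i => max (diam (T n i)).toReal (η n i) with hD
  have hηpos : ∀ n i, 0 < η n i := fun n i => Real.rpow_pos_of_pos (by positivity) _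
  have hDpos : ∀ n i, 0 < D n i := fun n i => lt_max_of_lt_right (hηpos n i)
  have hTne : ∀ n i, diam (T n i) ≠ ∞ := fun n i =>
    ((hTd n i).trans_lt (ENNReal.pow_lt_top (by norm_num))).ne
  have hTle : ∀ n i, diam (T n i) ≤ ENNReal.ofReal (D n i) := fun n i => by
    rw [← ENNReal.ofReal_toReal (hTne n i)]
    exact ENNReal.ofReal_le_ofReal (le_max_left _ _)
  have hηle : ∀ n i, η n i ≤ (2:ℝ)⁻¹ ^ n := by
    intro n i
    have h1 : ((2:ℝ)⁻¹ ^ (n + i + 1)) ^ s⁻¹ ≤ ((2:ℝ)⁻¹ ^ (n + i + 1)) ^ (1:ℝ) := by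
      apply Real.rpow_le_rpow_of_exponent_ge (by positivity)
      · exact pow_le_one₀ (by norm_num) (by norm_num)
      · exact (one_le_inv₀ hs).mpr hs1
    rw [Real.rpow_one] at h1
    refine h1.trans ?_
    exact pow_le_pow_of_le_one (by norm_num) (by norm_num) (by omega)
  have hDle : ∀ n i, D n i ≤ (2:ℝ)⁻¹ ^ n := by
    intro n i
    apply max_le _ (hηle n i)
    have := hTd n i
    rw [← ENNReal.ofReal_toReal (hTne n i)] at this
    have h2 : ENNReal.ofReal ((diam (T n i)).toReal) ≤ ENNReal.ofReal ((2:ℝ)⁻¹ ^ n) := by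
      rw [h2r n]; exact this
    exact (ENNReal.ofReal_le_ofReal_iff (by positivity)).mp h2
  have hD1 : ∀ n i, D n i ≤ 1 := fun n i =>
    (hDle n i).trans (pow_le_one₀ (by norm_num) (by norm_num))
  -- the covering pieces
  set u : ∀ _ : ℕ, ℕ × ℕ → Set (ℝ × ℝ) := fun n p =>
    T n p.1 ×ˢ (Icc (0:ℝ) 1 ∩ Icc (p.2 * D n p.1) ((p.2 + 1) * D n p.1)) with hu
  have hdiam_u : ∀ n i k, diam (u n (i, k)) ≤ ENNReal.ofReal (D n i) := by
    intro n i k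
    have : diam (u n (i,k)) ≤ max (diam (T n i))
        (diam (Icc (0:ℝ) 1 ∩ Icc (k * D n i) ((k + 1) * D n i))) := by
      apply EMetric.diam_le
      rintro ⟨x,y⟩ ⟨hx,hy⟩ ⟨x',y'⟩ ⟨hx',hy'⟩
      rw [Prod.edist_eq]
      exact max_le_max (EMetric.edist_le_diam_of_mem hx hx')
        (EMetric.edist_le_diam_of_mem hy hy')
    refine this.trans (max_le (hTle n i) ?_)
    refine (EMetric.diam_mono inter_subset_right).trans ?_
    rw [Real.ediam_Icc]
    apply ENNReal.ofReal_le_ofReal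
    nlinarith [hDpos n i]

  -- inner sum bound for each (n, i)
  have hinner : ∀ n i, (∑' k : ℕ, diam (u n (i, k)) ^ (1 + s)) ≤
      2 * (diam (T n i) ^ s + 2⁻¹ ^ (n + i + 1)) := by
    intro n i
    set K := ⌊1 / D n i⌋₊ with hK
    have hempty : ∀ k : ℕ, K < k → u n (i, k) = ∅ := by
      intro k hk
      have h1 : (1:ℝ) < k * D n i := by
        have h2 : 1 / D n i < K + 1 := Nat.lt_floor_add_one _
        have h3 : (K:ℝ) + 1 ≤ k := by exact_mod_cast hk
        have := hDpos n i
        rw [div_lt_iff₀ this] at h2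
        nlinarith
      have : Icc (0:ℝ) 1 ∩ Icc (k * D n i) ((k + 1) * D n i) = ∅ := by
        rw [eq_empty_iff_forall_notMem]
        rintro y ⟨⟨_, hy1⟩, hy2, _⟩
        linarith
      simp [hu, this]
    have hsum : (∑' k : ℕ, diam (u n (i, k)) ^ (1 + s)) =
        ∑ k ∈ Finset.range (K + 1), diam (u n (i, k)) ^ (1 + s) := by
      apply tsum_eq_sum
      intro k hk
      rw [hempty k (by simpa [Finset.mem_range] using hk), EMetric.diam, Metric.ediam_empty]
      exact ENNReal.zero_rpow_of_pos (by linarith)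
    rw [hsum]
    have hstep : ∑ k ∈ Finset.range (K + 1), diam (u n (i, k)) ^ (1 + s) ≤
        (K + 1 : ℝ≥0∞) * ENNReal.ofReal (D n i) ^ (1 + s) := by
      calc ∑ k ∈ Finset.range (K + 1), diam (u n (i, k)) ^ (1 + s)
          ≤ ∑ _k ∈ Finset.range (K + 1), ENNReal.ofReal (D n i) ^ (1 + s) :=
            Finset.sum_le_sum fun k _ => ENNReal.rpow_le_rpow (hdiam_u n i k) (by linarith)
        _ = (K + 1 : ℝ≥0∞) * ENNReal.ofReal (D n i) ^ (1 + s) := by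
            rw [Finset.sum_const, Finset.card_range, nsmul_eq_mul]; push_cast; ring_nf
    refine hstep.trans ?_
    have hdne : ENNReal.ofReal (D n i) ≠ 0 := (ENNReal.ofReal_pos.mpr (hDpos n i)).ne'
    have hsplit : ENNReal.ofReal (D n i) ^ (1 + s) =
        ENNReal.ofReal (D n i) * ENNReal.ofReal (D n i) ^ s := by
      rw [ENNReal.rpow_add 1 s hdne ENNReal.ofReal_ne_top, ENNReal.rpow_one]
    rw [hsplit, ← mul_assoc]
    have hfirst : (K + 1 : ℝ≥0∞) * ENNReal.ofReal (D n i) ≤ 2 := by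
      have : (K + 1 : ℝ≥0∞) * ENNReal.ofReal (D n i) = ENNReal.ofReal (((K:ℝ) + 1) * D n i) := by
        rw [ENNReal.ofReal_mul (by positivity)]
        rw [ENNReal.ofReal_add (by positivity) zero_le_one, ENNReal.ofReal_natCast,
          ENNReal.ofReal_one]
      rw [this]
      have hKD : (K:ℝ) * D n i ≤ 1 := by
        have := Nat.floor_le (a := 1 / D n i) (by positivity)
        rw [← hK] at this
        calc (K:ℝ) * D n i ≤ (1 / D n i) * D n i :=
              mul_le_mul_of_nonneg_right this (hDpos n i).le
          _ = 1 := by rw [one_div, inv_mul_cancel₀ (hDpos n i).ne']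
      calc ENNReal.ofReal (((K:ℝ) + 1) * D n i) ≤ ENNReal.ofReal 2 := by
            apply ENNReal.ofReal_le_ofReal
            have := hD1 n i
            nlinarith
        _ = 2 := by norm_num
    have hsecond : ENNReal.ofReal (D n i) ^ s ≤ diam (T n i) ^ s + 2⁻¹ ^ (n + i + 1) := by
      have e1 : ENNReal.ofReal (D n i) ^ s = ENNReal.ofReal (D n i ^ s) :=
        ENNReal.ofReal_rpow_of_pos (hDpos n i)
      have e2 : D n i ^ s ≤ (diam (T n i)).toReal ^ s + η n i ^ s := by
        rcases max_cases (diam (T n i)).toReal (η n i) with ⟨hm, _⟩ | ⟨hm, _⟩ <;>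
          rw [hD] <;> simp only at hm ⊢ <;> rw [hm]
        · have : (0:ℝ) ≤ η n i ^ s := Real.rpow_nonneg (hηpos n i).le s
          linarith
        · have : (0:ℝ) ≤ (diam (T n i)).toReal ^ s := Real.rpow_nonneg ENNReal.toReal_nonneg s
          linarith
      have e3 : ENNReal.ofReal ((diam (T n i)).toReal ^ s) = diam (T n i) ^ s := by
        rw [← ENNReal.ofReal_rpow_of_nonneg ENNReal.toReal_nonneg hs.le,
          ENNReal.ofReal_toReal (hTne n i)]
      have e4 : ENNReal.ofReal (η n i ^ s) = 2⁻¹ ^ (n + i + 1) := by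
        rw [hη]
        simp only
        rw [← Real.rpow_mul (by positivity), inv_mul_cancel₀ hs.ne', Real.rpow_one, h2r]
      calc ENNReal.ofReal (D n i) ^ s = ENNReal.ofReal (D n i ^ s) := e1
        _ ≤ ENNReal.ofReal ((diam (T n i)).toReal ^ s + η n i ^ s) :=
            ENNReal.ofReal_le_ofReal e2
        _ ≤ ENNReal.ofReal ((diam (T n i)).toReal ^ s) + ENNReal.ofReal (η n i ^ s) :=
            ENNReal.ofReal_add_le
        _ = diam (T n i) ^ s + 2⁻¹ ^ (n + i + 1) := by rw [e3, e4]
    exact mul_le_mul' hfirst hsecond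
  -- total bound for each n
  have hbound : ∀ n : ℕ, (∑' p : ℕ × ℕ, diam (u n p) ^ (1 + s)) ≤ 4 * 2⁻¹ ^ n := by
    intro n
    have hgeo : (∑' i : ℕ, (2⁻¹ : ℝ≥0∞) ^ (n + i + 1)) = 2⁻¹ ^ n := by
      have : ∀ i : ℕ, (2⁻¹ : ℝ≥0∞) ^ (n + i + 1) = 2⁻¹ ^ n * 2⁻¹ * 2⁻¹ ^ i := by
        intro i; rw [show n + i + 1 = n + 1 + i by ring, pow_add, pow_add, pow_one]
      simp_rw [this]
      rw [ENNReal.tsum_mul_left, ENNReal.tsum_geometric]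
      rw [ENNReal.one_sub_inv_two, inv_inv, mul_assoc,
        ENNReal.inv_mul_cancel (by norm_num) (by norm_num), mul_one]
    calc (∑' p : ℕ × ℕ, diam (u n p) ^ (1 + s))
        = ∑' i : ℕ, ∑' k : ℕ, diam (u n (i, k)) ^ (1 + s) :=
          ENNReal.tsum_prod (f := fun i k => diam (u n (i, k)) ^ (1 + s))
      _ ≤ ∑' i : ℕ, 2 * (diam (T n i) ^ s + 2⁻¹ ^ (n + i + 1)) :=
          ENNReal.tsum_le_tsum fun i => hinner n i
      _ = 2 * ((∑' i : ℕ, diam (T n i) ^ s) + ∑' i : ℕ, (2⁻¹:ℝ≥0∞) ^ (n + i + 1)) := by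
          rw [ENNReal.tsum_mul_left, ENNReal.tsum_add]
      _ ≤ 2 * ((2⁻¹:ℝ≥0∞) ^ n + 2⁻¹ ^ n) := by
          gcongr
          · exact hTs n
          · exact hgeo.le
      _ = 4 * 2⁻¹ ^ n := by ring
  refine le_trans (Measure.hausdorffMeasure_le_liminf_tsum (1 + s) (A ×ˢ Icc (0:ℝ) 1)
    (l := Filter.atTop) (fun n : ℕ => (2⁻¹ : ℝ≥0∞) ^ n)
    (ENNReal.tendsto_pow_atTop_nhds_zero_of_lt_one (by norm_num)) u ?_ ?_) ?_
  · refine Eventually.of_forall fun n => ?_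
    rintro ⟨i, k⟩
    refine (hdiam_u n i k).trans ?_
    show ENNReal.ofReal (D n i) ≤ (2⁻¹ : ℝ≥0∞) ^ n
    rw [← h2r n]
    exact ENNReal.ofReal_le_ofReal (hDle n i)
  · refine Eventually.of_forall fun n => ?_
    rintro ⟨x, y⟩ ⟨hx, hy⟩
    obtain ⟨i, hi⟩ := mem_iUnion.mp (hTc n hx)
    have hDp := hDpos n i
    refine mem_iUnion.mpr ⟨(i, ⌊y / D n i⌋₊), hi, hy, ?_, ?_⟩
    · have h0 : (⌊y / D n i⌋₊ : ℝ) ≤ y / D n i := Nat.floor_le (div_nonneg hy.1 hDp.le)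
      calc (⌊y / D n i⌋₊ : ℝ) * D n i ≤ (y / D n i) * D n i :=
            mul_le_mul_of_nonneg_right h0 hDp.le
        _ = y := by field_simp
    · have h1 : y / D n i < ⌊y / D n i⌋₊ + 1 := Nat.lt_floor_add_one _
      rw [div_lt_iff₀ hDp] at h1
      exact h1.le
  · refine le_trans (liminf_le_liminf (Eventually.of_forall hbound)) ?_
    have htend : Tendsto (fun n : ℕ => 4 * (2⁻¹ : ℝ≥0∞) ^ n) atTop (𝓝 0) := by
      have h0 : Tendsto (fun n : ℕ => (2⁻¹ : ℝ≥0∞) ^ n) atTop (𝓝 0) :=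
        ENNReal.tendsto_pow_atTop_nhds_zero_of_lt_one (by norm_num)
      have := ENNReal.Tendsto.const_mul (a := 4) h0 (Or.inr (by simp))
      simpa using this
    exact le_of_eq htend.liminf_eq

lemma prod_dimH_le (A : Set ℝ) (hA : dimH A = 0) : dimH (A ×ˢ Icc (0:ℝ) 1) ≤ 1 := by
  refine ENNReal.le_of_forall_pos_le_add fun ε hε _ => ?_
  set s : ℝ≥0 := min ε 1 with hsdef
  have hs0 : 0 < s := lt_min hε one_pos
  have hs1 : s ≤ 1 := min_le_right _ _
  have hmuA : μH[(s : ℝ)] A = 0 :=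
    hausdorffMeasure_of_dimH_lt (by rw [hA]; exact_mod_cast hs0)
  have hmu : μH[((1 + s : ℝ≥0) : ℝ)] (A ×ˢ Icc (0:ℝ) 1) = 0 := by
    have := prod_null A (by exact_mod_cast hs0) (by exact_mod_cast hs1) hmuA
    convert this using 2
    rw [NNReal.coe_add, NNReal.coe_one]
  have hle : dimH (A ×ˢ Icc (0:ℝ) 1) ≤ ((1 + s : ℝ≥0) : ℝ≥0∞) :=
    dimH_le_of_hausdorffMeasure_ne_top (by rw [hmu]; exact ENNReal.zero_ne_top)
  refine hle.trans ?_
  have : s ≤ ε := min_le_left _ _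
  calc ((1 + s : ℝ≥0) : ℝ≥0∞) = 1 + (s : ℝ≥0∞) := by push_cast; rfl
    _ ≤ 1 + (ε : ℝ≥0∞) := add_le_add le_rfl (ENNReal.coe_le_coe.mpr this)

theorem stmt_0 (f : ℝ → ℝ) (hf : StrictConvexOn ℝ (Set.Icc (0 : ℝ) 1) f)
    (Y : Set (ℝ × ℝ)) (hY : ∀ p ∈ Y, IsSuppTangent f p.1 p.2)
    (hslope : dimH (Prod.fst '' Y) = 0) :
    dimH (⋃ p ∈ Y, lineAB p.1 p.2) ≤ 1 := by
  rcases Y.eq_empty_or_nonempty with rfl | ⟨p₀, hp₀⟩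
  · simp
  -- the baseline: every point of `Icc 0 1` has `f x ≥ p₀.1 * x + p₀.2`
  have hbase : ∀ x ∈ Icc (0:ℝ) 1, p₀.1 * x + p₀.2 ≤ f x := by
    intro x hx
    obtain ⟨x₀, hx₀, heq, hlt⟩ := hY p₀ hp₀
    rcases eq_or_ne x x₀ with rfl | hne
    · exact heq.le
    · exact (hlt x hx hne).le
  -- the intercept function
  set g : ℝ → ℝ := fun a => sInf ((fun x => f x - a * x) '' Icc 0 1) with hg
  have hSne : ∀ a : ℝ, ((fun x => f x - a * x) '' Icc (0:ℝ) 1).Nonempty :=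
    fun a => (nonempty_Icc.mpr zero_le_one).image _
  have hSbdd : ∀ a : ℝ, BddBelow ((fun x => f x - a * x) '' Icc (0:ℝ) 1) := by
    intro a
    refine ⟨p₀.2 - |p₀.1| - |a|, ?_⟩
    rintro y ⟨x, hx, rfl⟩
    have h1 : p₀.1 * x + p₀.2 ≤ f x := hbase x hx
    have h2 : |p₀.1 * x| ≤ |p₀.1| := by
      rw [abs_mul]
      nlinarith [abs_nonneg p₀.1, abs_le.mpr ⟨(by linarith [hx.1] : -(1:ℝ) ≤ x), hx.2⟩]
    have h3 : |a * x| ≤ |a| := by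
      rw [abs_mul]
      nlinarith [abs_nonneg a, abs_le.mpr ⟨(by linarith [hx.1] : -(1:ℝ) ≤ x), hx.2⟩]
    have := abs_le.mp h2
    have := abs_le.mp h3
    show p₀.2 - |p₀.1| - |a| ≤ f x - a * x
    linarith
  -- every line in Y has intercept g of its slope
  have hYg : ∀ p ∈ Y, p.2 = g p.1 := by
    intro p hp
    obtain ⟨x₀, hx₀, heq, hlt⟩ := hY p hp
    refine le_antisymm ?_ ?_
    · refine le_csInf (hSne p.1) ?_
      rintro y ⟨x, hx, rfl⟩
      show p.2 ≤ f x - p.1 * x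
      rcases eq_or_ne x x₀ with rfl | hne
      · linarith [heq]
      · linarith [hlt x hx hne]
    · exact csInf_le (hSbdd p.1) ⟨x₀, hx₀, by show f x₀ - p.1 * x₀ = p.2; linarith [heq]⟩
  -- g is 1-Lipschitz
  have hgl : ∀ a a' : ℝ, g a - g a' ≤ |a - a'| := by
    intro a a'
    have hlb : ∀ y ∈ (fun x => f x - a' * x) '' Icc (0:ℝ) 1, g a - |a - a'| ≤ y := by
      rintro y ⟨x, hx, rfl⟩
      have h1 : g a ≤ f x - a * x := csInf_le (hSbdd a) ⟨x, hx, rfl⟩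
      show g a - |a - a'| ≤ f x - a' * x
      have h2 : |(a' - a) * x| ≤ |a - a'| := by
        rw [abs_mul, abs_sub_comm]
        nlinarith [abs_nonneg (a - a'), abs_le.mpr ⟨(by linarith [hx.1] : -(1:ℝ) ≤ x), hx.2⟩]
      have := abs_le.mp h2
      show g a - |a - a'| ≤ f x - a' * x
      nlinarith [h1]
    have := le_csInf (hSne a') hlb
    rw [hg] at *
    linarith [this]
  have hglip : ∀ a a' : ℝ, |g a - g a'| ≤ |a - a'| := by
    intro a a'
    rw [abs_le]
    constructor
    · have := hgl a' a
      rw [abs_sub_comm] at this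
      linarith
    · exact hgl a a'
  -- the parametrizing maps
  set F : ℕ → ℝ × ℝ → ℝ × ℝ :=
    fun n q => ((2 * q.2 - 1) * n, q.1 * ((2 * q.2 - 1) * n) + g q.1) with hF
  set A : Set ℝ := Prod.fst '' Y with hA
  -- covering
  have hcov : (⋃ p ∈ Y, lineAB p.1 p.2) ⊆
      ⋃ n : ℕ, F n '' ((A ∩ Icc (-(n:ℝ)) n) ×ˢ Icc (0:ℝ) 1) := by
    rintro ⟨t, y⟩ hz
    simp only [mem_iUnion, lineAB, mem_setOf_eq] at hz
    obtain ⟨p, hp, hy⟩ := hz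
    set n : ℕ := ⌈max |p.1| |t|⌉₊ + 1 with hn
    have hnpos : (0:ℝ) < n := by positivity
    have hmax : max |p.1| |t| ≤ n := by
      calc max |p.1| |t| ≤ ⌈max |p.1| |t|⌉₊ := Nat.le_ceil _
        _ ≤ n := by exact_mod_cast Nat.le_succ _
    have hat : |p.1| ≤ n := le_trans (le_max_left _ _) hmax
    have htt : |t| ≤ n := le_trans (le_max_right _ _) hmax
    refine mem_iUnion.mpr ⟨n, ⟨(p.1, (t / n + 1) / 2), ⟨⟨⟨p, hp, rfl⟩, ?_⟩, ?_⟩, ?_⟩⟩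
    · rw [mem_Icc]
      constructor <;> [linarith [abs_le.mp hat |>.1]; linarith [abs_le.mp hat |>.2]]
    · rw [mem_Icc]
      have h1 := abs_le.mp htt
      have h2 : -1 ≤ t / n := by rw [le_div_iff₀ hnpos]; linarith [h1.1]
      have h3 : t / n ≤ 1 := by rw [div_le_one hnpos]; exact h1.2
      constructor <;> [linarith; linarith]
    · have he : (2 * ((t / n + 1) / 2) - 1) * n = t := by field_simp; ring
      rw [hF]
      simp only
      rw [he, Prod.ext_iff]
      exact ⟨rfl, by simp [hy, hYg p hp]⟩
  -- Lipschitz bound on each box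
  have hlip : ∀ n : ℕ, LipschitzOnWith ((2*n^2 + 2*n + 1 : ℕ) : ℝ≥0) (F n)
      ((A ∩ Icc (-(n:ℝ)) n) ×ˢ Icc (0:ℝ) 1) := by
    intro n
    rw [lipschitzOnWith_iff_dist_le_mul]
    rintro ⟨a, u⟩ ⟨⟨_, ha⟩, hu⟩ ⟨a', u'⟩ ⟨⟨_, ha'⟩, hu'⟩
    rw [Prod.dist_eq, Prod.dist_eq]
    simp only [Real.dist_eq, hF]
    rw [mem_Icc] at ha ha' hu hu'
    set m := max |a - a'| |u - u'| with hm
    have hm1 : |a - a'| ≤ m := le_max_left _ _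
    have hm2 : |u - u'| ≤ m := le_max_right _ _
    have hmnn : 0 ≤ m := le_trans (abs_nonneg _) hm1
    have hKc : (((2*n^2 + 2*n + 1 : ℕ) : ℝ≥0) : ℝ) = 2*(n:ℝ)^2 + 2*n + 1 := by
      push_cast; ring
    have hcomp1 : |(2 * u - 1) * n - (2 * u' - 1) * n| ≤ 2 * n * m := by
      have : (2 * u - 1) * n - (2 * u' - 1) * n = 2 * (n:ℝ) * (u - u') := by ring
      rw [this, abs_mul, abs_of_nonneg (by positivity : (0:ℝ) ≤ 2 * (n:ℝ))]
      nlinarith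
    have hcomp2 : |a * ((2 * u - 1) * n) + g a - (a' * ((2 * u' - 1) * n) + g a')|
        ≤ (2 * (n:ℝ)^2 + n + 1) * m := by
      have e1 : a * ((2 * u - 1) * n) + g a - (a' * ((2 * u' - 1) * n) + g a')
          = a * (2 * (u - u')) * n + (a - a') * (2 * u' - 1) * n + (g a - g a') := by ring
      have haa : |a| ≤ (n:ℝ) := abs_le.mpr ⟨ha.1, ha.2⟩
      have h1 : |a * (2 * (u - u')) * n| ≤ 2 * (n:ℝ)^2 * m := by
        have e : |a * (2 * (u - u')) * n| = |a| * (2 * |u - u'|) * n := by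
          rw [abs_mul, abs_mul, abs_mul, abs_two, Nat.abs_cast]
        rw [e]
        have k1 : |a| * |u - u'| ≤ (n:ℝ) * m :=
          mul_le_mul haa hm2 (abs_nonneg _) (Nat.cast_nonneg n)
        nlinarith [k1, Nat.cast_nonneg (α := ℝ) n, abs_nonneg a, abs_nonneg (u - u')]
      have h2 : |(a - a') * (2 * u' - 1) * n| ≤ ((n:ℝ) * m) := by
        have e : |(a - a') * (2 * u' - 1) * n| = |a - a'| * |2 * u' - 1| * n := by
          rw [abs_mul, abs_mul, Nat.abs_cast]
        rw [e]
        have h2u : |2 * u' - 1| ≤ 1 := abs_le.mpr ⟨by linarith [hu'.1], by linarith [hu'.2]⟩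
        have k2 : |a - a'| * |2 * u' - 1| ≤ m * 1 :=
          mul_le_mul hm1 h2u (abs_nonneg _) hmnn
        nlinarith [k2, Nat.cast_nonneg (α := ℝ) n, abs_nonneg (a - a')]
      have h3 : |g a - g a'| ≤ m := le_trans (hglip a a') hm1
      rw [e1]
      have tri : |a * (2 * (u - u')) * n + (a - a') * (2 * u' - 1) * n + (g a - g a')|
          ≤ |a * (2 * (u - u')) * n| + |(a - a') * (2 * u' - 1) * n| + |g a - g a'| :=
        (abs_add_le _ _).trans (add_le_add (abs_add_le _ _) le_rfl)
      linarith [tri, h1, h2, h3]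
    rw [hKc]
    apply max_le
    · refine hcomp1.trans ?_
      nlinarith [mul_nonneg (sq_nonneg (n:ℝ)) hmnn, hmnn]
    · refine hcomp2.trans ?_
      nlinarith [mul_nonneg (Nat.cast_nonneg (α := ℝ) n) hmnn]
  -- conclude
  refine le_trans (dimH_mono hcov) ?_
  rw [dimH_iUnion]
  refine iSup_le fun n => ?_
  refine le_trans ((hlip n).dimH_image_le) ?_
  exact prod_dimH_le _ (le_antisymm (le_trans (dimH_mono inter_subset_left) hslope.le)
    zero_le)
end

section
/- Let Y ⊂ ℝ² be a set of Hausdorff dimension 0, viewed as a code set of non-vertical lines, i.e., each (a,b) ∈ Y codes the line {(t, a·t + b) : t ∈ ℝ}. Then the union of these lines, ⋃_{(a,b) ∈ Y} {(t, a·t + b) : t ∈ ℝ}, has Hausdorff dimension at most 1. -/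
open Set MeasureTheory ENNReal NNReal Filter

section helpers
variable {X : Type*} [EMetricSpace X] [MeasurableSpace X] [BorelSpace X]

lemma exists_cover_of_hausdorffMeasure_zero (s : Set X) {d : ℝ} (hd : 0 < d)
    (h : μH[d] s = 0) {r : ℝ≥0∞} (hr : 0 < r) :
    ∃ t : ℕ → Set X, (s ⊆ ⋃ n, t n) ∧ (∀ n, EMetric.diam (t n) ≤ r) ∧
      ∑' n, EMetric.diam (t n) ^ d < 1 := by
  rw [MeasureTheory.Measure.hausdorffMeasure_apply] at h
  have h1 : (⨅ (t : ℕ → Set X) (_ : s ⊆ ⋃ n, t n) (_ : ∀ n, EMetric.diam (t n) ≤ r),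
      ∑' n, ⨆ _ : (t n).Nonempty, EMetric.diam (t n) ^ d) = 0 := by
    refine le_antisymm ?_ zero_le
    rw [← h]
    exact le_iSup₂ (f := fun (r : ℝ≥0∞) (_ : 0 < r) => ⨅ (t : ℕ → Set X) (_ : s ⊆ ⋃ n, t n)
      (_ : ∀ n, EMetric.diam (t n) ≤ r),
      ∑' n, ⨆ _ : (t n).Nonempty, EMetric.diam (t n) ^ d) r hr
  have h2 : (⨅ (t : ℕ → Set X) (_ : s ⊆ ⋃ n, t n) (_ : ∀ n, EMetric.diam (t n) ≤ r),
      ∑' n, ⨆ _ : (t n).Nonempty, EMetric.diam (t n) ^ d) < 1 := h1 ▸ zero_lt_one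
  simp only [iInf_lt_iff] at h2
  obtain ⟨t, hts, htr, htsum⟩ := h2
  refine ⟨t, hts, htr, lt_of_le_of_lt (le_of_eq (tsum_congr fun n => ?_)) htsum⟩
  rcases eq_empty_or_nonempty (t n) with he | hne
  · simp [he, EMetric.diam, ENNReal.zero_rpow_of_pos hd]
  · simp [hne]

end helpers

lemma ediam_prod_le' {α β : Type*} [PseudoEMetricSpace α] [PseudoEMetricSpace β]
    (s : Set α) (u : Set β) :
    EMetric.diam (s ×ˢ u) ≤ max (EMetric.diam s) (EMetric.diam u) :=
  EMetric.diam_le fun x hx y hy => by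
    rw [Prod.edist_eq]
    exact max_le_max (EMetric.edist_le_diam_of_mem hx.1 hy.1)
      (EMetric.edist_le_diam_of_mem hx.2 hy.2)

lemma dimH_prod_Icc_le (A : Set (ℝ × ℝ)) {a b : ℝ} (hab : a ≤ b) {ε : ℝ≥0} (hε : 0 < ε)
    (hA : μH[(ε : ℝ)] A = 0) : dimH (A ×ˢ Icc a b) ≤ 1 + (ε : ℝ≥0∞) := by
  have hεR : (0:ℝ) < ε := by exact_mod_cast hε
  set d : ℝ := 1 + (ε : ℝ) with hd_def
  have hd : (0:ℝ) < d := by positivity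
  -- covers of A at scale 2⁻ᵐ
  have hcov : ∀ m : ℕ, ∃ t : ℕ → Set (ℝ × ℝ), (A ⊆ ⋃ n, t n) ∧
      (∀ n, EMetric.diam (t n) ≤ (2⁻¹ : ℝ≥0∞) ^ m) ∧
      ∑' n, EMetric.diam (t n) ^ (ε : ℝ) < 1 := fun m =>
    exists_cover_of_hausdorffMeasure_zero A hεR hA (ENNReal.pow_pos (ENNReal.inv_pos.2 ENNReal.ofNat_ne_top) m)
  choose t ht1 ht2 ht3 using hcov
  -- the enlarged mesh sizes
  set δ : ℕ → ℕ → ℝ := fun m n => max (EMetric.diam (t m n)).toReal ((2⁻¹:ℝ)^m * (2⁻¹:ℝ)^n)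
    with hδ_def
  have hδpos : ∀ m n, 0 < δ m n := fun m n =>
    lt_of_lt_of_le (by positivity) (le_max_right _ _)
  have htop : ∀ m n, EMetric.diam (t m n) ≠ ⊤ := fun m n =>
    ((ht2 m n).trans_lt (lt_top_iff_ne_top.2 (ENNReal.pow_ne_top (ENNReal.inv_ne_top.2 (by norm_num))))).ne
  have hδle : ∀ m n, δ m n ≤ (2⁻¹:ℝ)^m := by
    intro m n
    refine max_le ?_ ?_
    · have := ENNReal.toReal_mono (ENNReal.pow_ne_top (ENNReal.inv_ne_top.2 (by norm_num))) (ht2 m n)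
      simpa using this
    · calc (2⁻¹:ℝ)^m * (2⁻¹:ℝ)^n ≤ (2⁻¹:ℝ)^m * 1 := by
            refine mul_le_mul_of_nonneg_left ?_ (by positivity)
            exact pow_le_one₀ (by norm_num) (by norm_num)
        _ = (2⁻¹:ℝ)^m := mul_one _
  have hδ1 : ∀ m n, δ m n ≤ 1 :=
    fun m n => (hδle m n).trans (pow_le_one₀ (by norm_num) (by norm_num))
  have hdiam_le : ∀ m n, EMetric.diam (t m n) ≤ ENNReal.ofReal (δ m n) := by
    intro m n
    rw [← ENNReal.ofReal_toReal (htop m n)]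
    exact ENNReal.ofReal_le_ofReal (le_max_left _ _)
  -- the product covers
  set T : ℕ → ℕ × ℕ → Set ((ℝ × ℝ) × ℝ) := fun m p =>
    t m p.1 ×ˢ (Icc a b ∩ Icc (a + p.2 * δ m p.1) (a + (p.2 + 1) * δ m p.1)) with hT_def
  have hcover : ∀ m, A ×ˢ Icc a b ⊆ ⋃ p, T m p := by
    rintro m ⟨x, y⟩ ⟨hx, hy⟩
    obtain ⟨n, hn⟩ : ∃ n, x ∈ t m n := by
      have := ht1 m hx; simpa using this
    have hδp := hδpos m n
    set k : ℕ := ⌊(y - a) / δ m n⌋₊ with hk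
    refine mem_iUnion.2 ⟨(n, k), hn, hy, ?_, ?_⟩
    · have h1 : (k:ℝ) ≤ (y - a) / δ m n := Nat.floor_le (by
        apply div_nonneg _ hδp.le; linarith [hy.1])
      have := (le_div_iff₀ hδp).mp h1
      simp only []
      linarith
    · have h2 : (y - a) / δ m n < k + 1 := Nat.lt_floor_add_one _
      have := (div_lt_iff₀ hδp).mp h2
      simp only []
      linarith
  have hdiamT : ∀ m p, EMetric.diam (T m p) ≤ ENNReal.ofReal (δ m p.1) := by
    intro m ⟨n, k⟩
    refine (ediam_prod_le' _ _).trans (max_le (hdiam_le m n) ?_)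
    refine (EMetric.diam_mono inter_subset_right).trans ?_
    rw [Real.ediam_Icc]
    exact ENNReal.ofReal_le_ofReal (by nlinarith [hδpos m n])
  have hdiamT2 : ∀ m p, EMetric.diam (T m p) ≤ (2⁻¹:ℝ≥0∞)^m := by
    intro m p
    refine (hdiamT m p).trans ?_
    calc ENNReal.ofReal (δ m p.1) ≤ ENNReal.ofReal ((2⁻¹:ℝ)^m) :=
          ENNReal.ofReal_le_ofReal (hδle m p.1)
      _ = (2⁻¹:ℝ≥0∞)^m := by
          rw [ENNReal.ofReal_pow (by norm_num)]
          congr 1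
          rw [ENNReal.ofReal_inv_of_pos (by norm_num), ENNReal.ofReal_ofNat]
  -- the geometric ratio
  set Q : ℝ≥0∞ := ENNReal.ofReal ((2⁻¹:ℝ) ^ (ε:ℝ)) with hQ_def
  have hQlt : Q < 1 := by
    rw [hQ_def, ← ENNReal.ofReal_one]
    exact (ENNReal.ofReal_lt_ofReal_iff (by norm_num)).2
      (Real.rpow_lt_one (by norm_num) (by norm_num) hεR)
  set B : ℝ≥0∞ := ENNReal.ofReal (b - a + 2) * (1 + (1 - Q)⁻¹) with hB_def
  have hBtop : B ≠ ⊤ := by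
    rw [hB_def]
    refine ENNReal.mul_ne_top ENNReal.ofReal_ne_top ?_
    refine ENNReal.add_ne_top.2 ⟨one_ne_top, ENNReal.inv_ne_top.2 ?_⟩
    simpa [tsub_eq_zero_iff_le] using hQlt.not_ge
  -- sum bound
  have hsum : ∀ m, ∑' p : ℕ × ℕ, EMetric.diam (T m p) ^ d ≤ B := by
    intro m
    rw [ENNReal.tsum_prod']
    have inner : ∀ n, ∑' k : ℕ, EMetric.diam (T m (n, k)) ^ d ≤
        ENNReal.ofReal (b - a + 2) * ENNReal.ofReal (δ m n ^ (ε:ℝ)) := by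
      intro n
      have hδp := hδpos m n
      set N : ℕ := ⌈(b - a) / δ m n⌉₊ + 1 with hN
      have hvanish : ∀ k ∉ Finset.range N, EMetric.diam (T m (n, k)) ^ d = 0 := by
        intro k hk
        simp only [Finset.mem_range, not_lt] at hk
        have hempty : Icc a b ∩ Icc (a + k * δ m n) (a + (k + 1) * δ m n) = ∅ := by
          rw [eq_empty_iff_forall_notMem]
          rintro y ⟨hy1, hy2⟩
          have h1 : (b - a) / δ m n ≤ ⌈(b - a) / δ m n⌉₊ := Nat.le_ceil _
          have h2 : (b - a) ≤ ⌈(b - a) / δ m n⌉₊ * δ m n := (div_le_iff₀ hδp).mp h1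
          have h3 : (N:ℝ) ≤ k := by exact_mod_cast hk
          have h4 : (N:ℝ) * δ m n ≤ k * δ m n := mul_le_mul_of_nonneg_right h3 hδp.le
          have h5 : (N:ℝ) * δ m n = ⌈(b - a) / δ m n⌉₊ * δ m n + δ m n := by
            rw [hN]; push_cast; ring
          have := hy1.2
          have := hy2.1
          nlinarith
        have : T m (n, k) = ∅ := by rw [hT_def]; simp [hempty]
        rw [this]
        simp [EMetric.diam, EMetric.diam_empty, ENNReal.zero_rpow_of_pos hd]
      rw [tsum_eq_sum hvanish]
      have hterm : ∀ k ∈ Finset.range N, EMetric.diam (T m (n, k)) ^ d ≤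
          ENNReal.ofReal (δ m n ^ d) := by
        intro k _
        calc EMetric.diam (T m (n, k)) ^ d ≤ (ENNReal.ofReal (δ m n)) ^ d :=
              ENNReal.rpow_le_rpow (hdiamT m (n, k)) hd.le
          _ = ENNReal.ofReal (δ m n ^ d) := ENNReal.ofReal_rpow_of_pos hδp
      calc ∑ k ∈ Finset.range N, EMetric.diam (T m (n, k)) ^ d
          ≤ ∑ _k ∈ Finset.range N, ENNReal.ofReal (δ m n ^ d) := Finset.sum_le_sum hterm
        _ = (N : ℝ≥0∞) * ENNReal.ofReal (δ m n ^ d) := by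
            rw [Finset.sum_const, Finset.card_range, nsmul_eq_mul]
        _ ≤ ENNReal.ofReal ((b - a) / δ m n + 2) * ENNReal.ofReal (δ m n ^ d) := by
            refine mul_le_mul_left ?_ _
            rw [← ENNReal.ofReal_natCast]
            refine ENNReal.ofReal_le_ofReal ?_
            have : ((⌈(b - a) / δ m n⌉₊ : ℝ)) < (b - a) / δ m n + 1 :=
              Nat.ceil_lt_add_one (div_nonneg (by linarith) hδp.le)
            rw [hN]; push_cast; linarith
        _ = ENNReal.ofReal (((b - a) / δ m n + 2) * δ m n ^ d) := by
            rw [← ENNReal.ofReal_mul (by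
              have h := div_nonneg (sub_nonneg.2 hab) (hδpos m n).le; linarith)]
        _ ≤ ENNReal.ofReal ((b - a + 2) * δ m n ^ (ε:ℝ)) := by
            refine ENNReal.ofReal_le_ofReal ?_
            have hsplit : δ m n ^ d = δ m n * δ m n ^ (ε:ℝ) := by
              rw [hd_def, Real.rpow_add hδp, Real.rpow_one]
            have h2 : δ m n ^ d ≤ δ m n ^ (ε:ℝ) :=
              Real.rpow_le_rpow_of_exponent_ge hδp (hδ1 m n) (by rw [hd_def]; linarith)
            have h3 : (b - a) / δ m n * δ m n ^ d = (b - a) * δ m n ^ (ε:ℝ) := by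
              rw [hsplit]; field_simp
            nlinarith [Real.rpow_nonneg hδp.le (ε:ℝ)]
        _ = ENNReal.ofReal (b - a + 2) * ENNReal.ofReal (δ m n ^ (ε:ℝ)) := by
            rw [← ENNReal.ofReal_mul (by linarith)]
    calc ∑' n, ∑' k, EMetric.diam (T m (n, k)) ^ d
        ≤ ∑' n, ENNReal.ofReal (b - a + 2) * ENNReal.ofReal (δ m n ^ (ε:ℝ)) :=
          ENNReal.tsum_le_tsum inner
      _ = ENNReal.ofReal (b - a + 2) * ∑' n, ENNReal.ofReal (δ m n ^ (ε:ℝ)) :=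
          ENNReal.tsum_mul_left
      _ ≤ B := by
          rw [hB_def]
          refine mul_le_mul_right ?_ _
          have hbd : ∀ n, ENNReal.ofReal (δ m n ^ (ε:ℝ)) ≤
              EMetric.diam (t m n) ^ (ε:ℝ) + Q ^ n := by
            intro n
            have hsplitmax : δ m n ^ (ε:ℝ) ≤ (EMetric.diam (t m n)).toReal ^ (ε:ℝ) +
                ((2⁻¹:ℝ)^m * (2⁻¹:ℝ)^n) ^ (ε:ℝ) := by
              rcases max_cases (EMetric.diam (t m n)).toReal ((2⁻¹:ℝ)^m * (2⁻¹:ℝ)^n) with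
                ⟨h, _⟩ | ⟨h, _⟩ <;> rw [hδ_def] <;> simp only [] <;> rw [h]
              · nlinarith [Real.rpow_nonneg (show (0:ℝ) ≤ (2⁻¹:ℝ)^m * (2⁻¹:ℝ)^n by positivity) (ε:ℝ)]
              · nlinarith [Real.rpow_nonneg (ENNReal.toReal_nonneg (a := EMetric.diam (t m n))) (ε:ℝ)]
            refine (ENNReal.ofReal_le_ofReal hsplitmax).trans ?_
            rw [ENNReal.ofReal_add (by positivity) (by positivity)]
            refine add_le_add ?_ ?_
            · rw [ENNReal.toReal_rpow, ENNReal.ofReal_toReal]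
              exact ENNReal.rpow_ne_top_of_nonneg hεR.le (htop m n)
            · rw [Real.mul_rpow (by positivity) (by positivity)]
              calc ENNReal.ofReal (((2⁻¹:ℝ)^m) ^ (ε:ℝ) * ((2⁻¹:ℝ)^n) ^ (ε:ℝ))
                  ≤ ENNReal.ofReal (1 * ((2⁻¹:ℝ)^n) ^ (ε:ℝ)) := by
                    refine ENNReal.ofReal_le_ofReal ?_
                    refine mul_le_mul_of_nonneg_right ?_ (by positivity)
                    exact Real.rpow_le_one (by positivity)
                      (pow_le_one₀ (by norm_num) (by norm_num)) hεR.le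
                _ = Q ^ n := by
                    rw [one_mul, hQ_def, ← ENNReal.ofReal_pow (by positivity)]
                    congr 1
                    rw [← Real.rpow_natCast ((2⁻¹:ℝ) ^ (ε:ℝ)) n,
                      ← Real.rpow_natCast (2⁻¹:ℝ) n, ← Real.rpow_mul (by norm_num),
                      ← Real.rpow_mul (by norm_num), mul_comm]
          calc ∑' n, ENNReal.ofReal (δ m n ^ (ε:ℝ))
              ≤ ∑' n, (EMetric.diam (t m n) ^ (ε:ℝ) + Q ^ n) := ENNReal.tsum_le_tsum hbd
            _ = (∑' n, EMetric.diam (t m n) ^ (ε:ℝ)) + ∑' n, Q ^ n := ENNReal.tsum_add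
            _ ≤ 1 + (1 - Q)⁻¹ := by
                refine add_le_add (ht3 m).le ?_
                rw [ENNReal.tsum_geometric]
  -- conclude
  have hmuH : μH[d] (A ×ˢ Icc a b) ≤ B := by
    have hliminf := MeasureTheory.Measure.hausdorffMeasure_le_liminf_tsum d (A ×ˢ Icc a b)
      (fun m => (2⁻¹:ℝ≥0∞)^m)
      (ENNReal.tendsto_pow_atTop_nhds_zero_of_lt_one (by norm_num)) T
      (Eventually.of_forall hdiamT2) (Eventually.of_forall hcover)
    refine hliminf.trans ?_
    refine (Filter.liminf_le_liminf (Eventually.of_forall hsum)).trans ?_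
    simp [Filter.liminf_const]
  have : dimH (A ×ˢ Icc a b) ≤ ((1 + ε : ℝ≥0) : ℝ≥0∞) := by
    refine dimH_le_of_hausdorffMeasure_ne_top ?_
    have hcast : ((1 + ε : ℝ≥0) : ℝ) = d := by rw [hd_def]; push_cast; ring
    rw [hcast]
    exact (hmuH.trans_lt hBtop.lt_top).ne
  simpa [ENNReal.coe_add] using this

theorem stmt_2 (Y : Set (ℝ × ℝ)) (hY : dimH Y = 0) :
    dimH (⋃ p ∈ Y, lineAB p.1 p.2) ≤ 1 := by
  classical
  set f : (ℝ × ℝ) × ℝ → ℝ × ℝ := fun q => (q.2, q.1.1 * q.2 + q.1.2) with hf_def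
  have hsub : (⋃ p ∈ Y, lineAB p.1 p.2) ⊆
      ⋃ (m : ℕ) (n : ℕ), f '' ((Y ∩ Metric.closedBall 0 m) ×ˢ Icc (-(n:ℝ)) n) := by
    rintro x hx
    simp only [mem_iUnion] at hx ⊢
    obtain ⟨p, hp, hxp⟩ := hx
    obtain ⟨m, hm⟩ := exists_nat_ge ‖p‖
    obtain ⟨n, hn⟩ := exists_nat_ge |x.1|
    refine ⟨m, n, ⟨(p, x.1), ⟨⟨hp, ?_⟩, ?_⟩, ?_⟩⟩
    · simpa [Metric.mem_closedBall, dist_zero_right] using hm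
    · obtain ⟨h1, h2⟩ := abs_le.mp hn
      exact ⟨h1, h2⟩
    · have : x.2 = p.1 * x.1 + p.2 := hxp
      exact Prod.ext rfl this.symm
  refine le_trans (dimH_mono hsub) ?_
  rw [dimH_iUnion]
  refine iSup_le fun m => ?_
  rw [dimH_iUnion]
  refine iSup_le fun n => ?_
  refine ENNReal.le_of_forall_pos_le_add fun ε hε _ => ?_
  have hA : μH[(ε:ℝ)] (Y ∩ Metric.closedBall 0 m) = 0 :=
    measure_mono_null inter_subset_left
      (hausdorffMeasure_of_dimH_lt (by rw [hY]; exact_mod_cast hε))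
  have hab : -(n:ℝ) ≤ (n:ℝ) := by
    have : (0:ℝ) ≤ n := Nat.cast_nonneg n
    linarith
  have hLip : LipschitzOnWith ((m:ℝ≥0) + n + 2) f
      ((Y ∩ Metric.closedBall 0 m) ×ˢ Icc (-(n:ℝ)) n) := by
    rw [lipschitzOnWith_iff_dist_le_mul]
    rintro q hq q' hq'
    set D := dist q q' with hD
    have hD0 : 0 ≤ D := dist_nonneg
    have hfst : dist q.1 q'.1 ≤ D := by rw [hD, Prod.dist_eq]; exact le_max_left _ _
    have e1 : |q.2 - q'.2| ≤ D := by
      have h1 : dist q.2 q'.2 ≤ D := by rw [hD, Prod.dist_eq]; exact le_max_right _ _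
      rwa [Real.dist_eq] at h1
    have e2 : |q.1.1 - q'.1.1| ≤ D := by
      have h1 : dist q.1.1 q'.1.1 ≤ dist q.1 q'.1 := by
        rw [Prod.dist_eq]; exact le_max_left _ _
      rw [Real.dist_eq] at h1
      linarith
    have e3 : |q.1.2 - q'.1.2| ≤ D := by
      have h1 : dist q.1.2 q'.1.2 ≤ dist q.1 q'.1 := by
        rw [Prod.dist_eq]; exact le_max_right _ _
      rw [Real.dist_eq] at h1
      linarith
    have b1 : |q.1.1| ≤ m := by
      have h1 : ‖q.1.1‖ ≤ ‖q.1‖ := norm_fst_le q.1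
      have h2 : ‖q.1‖ ≤ m := by
        have := hq.1.2
        rwa [Metric.mem_closedBall, dist_zero_right] at this
      simpa using h1.trans h2
    have b2 : |q'.2| ≤ n := abs_le.mpr ⟨(hq'.2).1, (hq'.2).2⟩
    have hcast : (((m:ℝ≥0) + n + 2 : ℝ≥0) : ℝ) = (m:ℝ) + n + 2 := by push_cast; ring
    rw [Prod.dist_eq, hcast]
    refine max_le ?_ ?_
    · rw [Real.dist_eq]
      simp only [hf_def]
      refine e1.trans ?_
      nlinarith
    · rw [Real.dist_eq]
      simp only [hf_def]
      have key : q.1.1 * q.2 + q.1.2 - (q'.1.1 * q'.2 + q'.1.2) =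
          q.1.1 * (q.2 - q'.2) + q'.2 * (q.1.1 - q'.1.1) + (q.1.2 - q'.1.2) := by ring
      calc |q.1.1 * q.2 + q.1.2 - (q'.1.1 * q'.2 + q'.1.2)|
          ≤ |q.1.1 * (q.2 - q'.2)| + |q'.2 * (q.1.1 - q'.1.1)| + |q.1.2 - q'.1.2| := by
            rw [key]; exact (abs_add_le _ _).trans (by gcongr; exact abs_add_le _ _)
        _ = |q.1.1| * |q.2 - q'.2| + |q'.2| * |q.1.1 - q'.1.1| + |q.1.2 - q'.1.2| := by
            rw [abs_mul, abs_mul]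
        _ ≤ (m:ℝ) * D + (n:ℝ) * D + D := by
            have h1 : |q.1.1| * |q.2 - q'.2| ≤ (m:ℝ) * D :=
              mul_le_mul b1 e1 (abs_nonneg _) (Nat.cast_nonneg m)
            have h2 : |q'.2| * |q.1.1 - q'.1.1| ≤ (n:ℝ) * D :=
              mul_le_mul b2 e2 (abs_nonneg _) (Nat.cast_nonneg n)
            linarith
        _ ≤ ((m:ℝ) + n + 2) * D := by nlinarith
  have h1 : dimH (f '' ((Y ∩ Metric.closedBall 0 m) ×ˢ Icc (-(n:ℝ)) n)) ≤
      dimH ((Y ∩ Metric.closedBall 0 m) ×ˢ Icc (-(n:ℝ)) n) := hLip.dimH_image_le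
  exact h1.trans (dimH_prod_Icc_le _ hab hε hA)
end

section
/- There exists a strictly increasing function f : [0,1] → ℝ whose range f([0,1]) has Hausdorff dimension 0. -/
open Set MeasureTheory Filter
open scoped NNReal ENNReal

noncomputable def gg : ℕ → ℝ := fun n => (2⁻¹ : ℝ) ^ (2 ^ n)

lemma gg_pos (n : ℕ) : 0 < gg n := pow_pos (by norm_num) _

lemma gg_le (n : ℕ) : gg n ≤ (2⁻¹ : ℝ) ^ n :=
  pow_le_pow_of_le_one (by norm_num) (by norm_num) (Nat.lt_two_pow_self (n := n)).le

lemma summable_gg : Summable gg :=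
  Summable.of_nonneg_of_le (fun n => (gg_pos n).le) gg_le
    (summable_geometric_of_lt_one (by norm_num) (by norm_num))

noncomputable def qq : ℕ → ℝ := fun n => ((Denumerable.eqv ℚ).symm n : ℚ)

noncomputable def aa (x : ℝ) : ℕ → ℝ := fun n => if qq n < x then gg n else 0

lemma aa_nonneg (x : ℝ) (n : ℕ) : 0 ≤ aa x n := by
  unfold aa; split <;> [exact (gg_pos n).le; rfl]

lemma aa_le (x : ℝ) (n : ℕ) : aa x n ≤ gg n := by
  unfold aa; split <;> [rfl; exact (gg_pos n).le]

lemma summable_aa (x : ℝ) : Summable (aa x) :=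
  Summable.of_nonneg_of_le (aa_nonneg x) (aa_le x) summable_gg

noncomputable def ff (x : ℝ) : ℝ := ∑' n, aa x n

lemma ff_strictMono : StrictMono ff := by
  intro x y hxy
  obtain ⟨r, hr1, hr2⟩ := exists_rat_btwn hxy
  set n := (Denumerable.eqv ℚ) r with hn
  have hq : qq n = (r : ℝ) := by simp [qq, hn]
  refine Summable.tsum_lt_tsum_of_nonneg (i := n) (aa_nonneg x) (fun k => ?_) ?_ (summable_aa y)
  · unfold aa
    split
    · rw [if_pos (lt_trans (by assumption) hxy)]
    · exact aa_nonneg y k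
  · unfold aa
    rw [hq, if_neg (not_lt.2 hr1.le), if_pos hr2]
    exact gg_pos n

noncomputable def TT (N : ℕ) : ℝ := ∑' i, gg (i + N)

lemma TT_nonneg (N : ℕ) : 0 ≤ TT N :=
  tsum_nonneg fun i => (gg_pos _).le

lemma TT_le (N : ℕ) : TT N ≤ (2⁻¹ : ℝ) ^ (2 ^ N) * 2 := by
  have h1 : ∀ i : ℕ, gg (i + N) ≤ (2⁻¹ : ℝ) ^ (2 ^ N) * (2⁻¹ : ℝ) ^ i := by
    intro i
    rw [← pow_add]
    refine pow_le_pow_of_le_one (by norm_num) (by norm_num) ?_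
    calc 2 ^ N + i ≤ 2 ^ N + i * 2 ^ N := by
          exact add_le_add_right (Nat.le_mul_of_pos_right i (Nat.pow_pos (a := 2) (n := N) (by norm_num))) _
      _ = (i + 1) * 2 ^ N := by ring
      _ ≤ 2 ^ i * 2 ^ N := Nat.mul_le_mul_right _ (Nat.lt_two_pow_self (n := i))
      _ = 2 ^ (i + N) := (pow_add 2 i N).symm
  calc TT N ≤ ∑' i, (2⁻¹ : ℝ) ^ (2 ^ N) * (2⁻¹ : ℝ) ^ i := by
        refine Summable.tsum_le_tsum h1 (summable_gg.comp_injective fun a b => by omega) ?_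
        exact (summable_geometric_of_lt_one (by norm_num) (by norm_num)).mul_left _
    _ = (2⁻¹ : ℝ) ^ (2 ^ N) * 2 := by
        rw [tsum_mul_left, tsum_geometric_of_lt_one (by norm_num) (by norm_num)]
        norm_num

noncomputable def cc (N : ℕ) (b : Fin N → Bool) : ℝ := ∑ k : Fin N, if b k then gg k else 0

lemma ff_mem_cover (N : ℕ) (x : ℝ) :
    ∃ b : Fin N → Bool, ff x ∈ Icc (cc N b) (cc N b + TT N) := by
  refine ⟨fun k => decide (qq k < x), ?_⟩
  have hsplit : ∑ i ∈ Finset.range N, aa x i + ∑' i, aa x (i + N) = ff x :=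
    (summable_aa x).sum_add_tsum_nat_add N
  have hcc : cc N (fun k => decide (qq k < x)) = ∑ i ∈ Finset.range N, aa x i := by
    rw [cc, Finset.sum_range fun i => aa x i]
    refine Finset.sum_congr rfl fun k _ => ?_
    simp [aa]
  have htail0 : 0 ≤ ∑' i, aa x (i + N) := tsum_nonneg fun i => aa_nonneg x _
  have htail1 : ∑' i, aa x (i + N) ≤ TT N := by
    refine Summable.tsum_le_tsum (fun i => aa_le x _) ?_ ?_
    · exact (summable_aa x).comp_injective fun a b => by omega
    · exact summable_gg.comp_injective fun a b => by omega
  constructor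
  · rw [hcc, ← hsplit]; linarith
  · rw [hcc, ← hsplit]; linarith

lemma hausdorff_zero (d : ℝ≥0) (hd : 0 < d) : μH[d] (range ff) = 0 := by
  have key := Measure.hausdorffMeasure_le_liminf_sum (X := ℝ) (β := ℕ) (ι := fun N => Fin N → Bool)
    (d : ℝ) (range ff) (l := atTop)
    (fun N => ENNReal.ofReal ((2⁻¹ : ℝ) ^ (2 ^ N) * 2)) ?_
    (fun N b => Icc (cc N b) (cc N b + TT N)) ?_ ?_
  · refine le_antisymm (key.trans ?_) zero_le
    have htend : Tendsto
        (fun N => ∑ b : Fin N → Bool, Metric.ediam (Icc (cc N b) (cc N b + TT N)) ^ (d : ℝ))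
        atTop (nhds 0) := by
      have heq : ∀ N, ∑ b : Fin N → Bool, Metric.ediam (Icc (cc N b) (cc N b + TT N)) ^ (d : ℝ)
          = ENNReal.ofReal ((2 ^ N : ℝ) * TT N ^ (d : ℝ)) := by
        intro N
        have hdiam : ∀ b : Fin N → Bool,
            Metric.ediam (Icc (cc N b) (cc N b + TT N)) ^ (d : ℝ)
              = ENNReal.ofReal (TT N ^ (d : ℝ)) := by
          intro b
          rw [Real.ediam_Icc, add_sub_cancel_left,
            ← ENNReal.ofReal_rpow_of_nonneg (TT_nonneg N) d.coe_nonneg]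
        simp only [hdiam, Finset.sum_const, Finset.card_univ]
        rw [ENNReal.ofReal_mul (by positivity), nsmul_eq_mul]
        congr 1
        · rw [Fintype.card_fun]
          simp [ENNReal.ofReal_pow]
      rw [show (0 : ℝ≥0∞) = ENNReal.ofReal 0 by simp]
      refine Tendsto.congr (fun N => (heq N).symm) (ENNReal.tendsto_ofReal ?_)
      -- real sequence tends to 0
      have hsq : ∀ N : ℕ, (2 ^ N : ℝ) * TT N ^ (d : ℝ)
          ≤ (2 : ℝ) ^ (d : ℝ) * ((2 ^ N : ℕ) * ((2⁻¹ : ℝ) ^ ((d : ℝ)) : ℝ) ^ (2 ^ N : ℕ)) := by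
        intro N
        have h1 : TT N ^ (d : ℝ) ≤ ((2⁻¹ : ℝ) ^ (2 ^ N) * 2) ^ (d : ℝ) :=
          Real.rpow_le_rpow (TT_nonneg N) (TT_le N) d.coe_nonneg
        have h2 : ((2⁻¹ : ℝ) ^ (2 ^ N) * 2) ^ (d : ℝ)
            = ((2⁻¹ : ℝ) ^ ((d : ℝ))) ^ (2 ^ N : ℕ) * (2 : ℝ) ^ (d : ℝ) := by
          rw [Real.mul_rpow (by positivity) (by norm_num), ← Real.rpow_natCast (2⁻¹ : ℝ) (2 ^ N),
            ← Real.rpow_mul (by norm_num), mul_comm ((2 ^ N : ℕ) : ℝ) (d : ℝ),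
            Real.rpow_mul (by norm_num), Real.rpow_natCast]
        calc (2 ^ N : ℝ) * TT N ^ (d : ℝ)
            ≤ (2 ^ N : ℝ) * (((2⁻¹ : ℝ) ^ ((d : ℝ))) ^ (2 ^ N : ℕ) * (2 : ℝ) ^ (d : ℝ)) := by
              rw [← h2]; exact mul_le_mul_of_nonneg_left (h1.trans_eq rfl) (by positivity)
          _ = (2 : ℝ) ^ (d : ℝ) * ((2 ^ N : ℕ) * ((2⁻¹ : ℝ) ^ ((d : ℝ))) ^ (2 ^ N : ℕ)) := by
              push_cast; ring
      have hr1 : (0 : ℝ) ≤ (2⁻¹ : ℝ) ^ ((d : ℝ)) := Real.rpow_nonneg (by norm_num) _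
      have hr2 : (2⁻¹ : ℝ) ^ ((d : ℝ)) < 1 :=
        Real.rpow_lt_one (by norm_num) (by norm_num) (by exact_mod_cast hd)
      have hbase : Tendsto (fun m : ℕ => (m : ℝ) * ((2⁻¹ : ℝ) ^ ((d : ℝ))) ^ m) atTop (nhds 0) :=
        tendsto_self_mul_const_pow_of_lt_one hr1 hr2
      have hexp : Tendsto (fun N : ℕ => 2 ^ N) atTop atTop :=
        tendsto_pow_atTop_atTop_of_one_lt (by norm_num)
      have hv : Tendsto (fun N : ℕ => (2 : ℝ) ^ (d : ℝ) *
          ((2 ^ N : ℕ) * ((2⁻¹ : ℝ) ^ ((d : ℝ))) ^ (2 ^ N : ℕ))) atTop (nhds 0) := by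
        have := (hbase.comp hexp).const_mul ((2 : ℝ) ^ (d : ℝ))
        simpa using this
      refine squeeze_zero (fun N => by have := TT_nonneg N; positivity) hsq hv
    rw [htend.liminf_eq]
  · -- r tends to 0
    rw [show (0 : ℝ≥0∞) = ENNReal.ofReal 0 by simp]
    refine ENNReal.tendsto_ofReal ?_
    have hexp : Tendsto (fun N : ℕ => 2 ^ N) atTop atTop :=
      tendsto_pow_atTop_atTop_of_one_lt (by norm_num)
    have hbase : Tendsto (fun m : ℕ => (2⁻¹ : ℝ) ^ m) atTop (nhds 0) :=
      tendsto_pow_atTop_nhds_zero_of_lt_one (by norm_num) (by norm_num)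
    have := (hbase.comp hexp).mul_const (2 : ℝ)
    simpa using this
  · -- diam bounds
    refine Eventually.of_forall fun N b => ?_
    rw [Real.ediam_Icc, add_sub_cancel_left]
    exact ENNReal.ofReal_le_ofReal (TT_le N)
  · -- covering
    refine Eventually.of_forall fun N => ?_
    rintro _ ⟨x, rfl⟩
    obtain ⟨b, hb⟩ := ff_mem_cover N x
    exact mem_iUnion.2 ⟨b, hb⟩

theorem stmt_4 :
    ∃ f : ℝ → ℝ, StrictMonoOn f (Set.Icc (0 : ℝ) 1) ∧
      dimH (f '' Set.Icc (0 : ℝ) 1) = 0 := by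
  refine ⟨ff, ff_strictMono.strictMonoOn _, ?_⟩
  have hsub : ff '' Set.Icc (0 : ℝ) 1 ⊆ range ff := image_subset_range _ _
  have hr : dimH (range ff) = 0 := by
    refine le_antisymm ?_ zero_le
    refine ENNReal.le_of_forall_pos_le_add fun ε hε _ => ?_
    rw [zero_add]
    exact dimH_le_of_hausdorffMeasure_ne_top (by rw [hausdorff_zero ε hε]; simp)
  exact le_antisymm (hr ▸ dimH_mono hsub) zero_le
end

section
/- Let f : [0,1] → ℝ be a differentiable function whose derivative f' is not constant on [0,1]. Then the union of the tangent lines of f, i.e., the set {(x, f(t) + f'(t)·(x − t)) : t ∈ [0,1], x ∈ ℝ} ⊂ ℝ², has Hausdorff dimension 2. -/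
open Set MeasureTheory intervalIntegral

private lemma aux_darboux (f f' : ℝ → ℝ)
    (hderiv : ∀ x ∈ Set.Icc (0 : ℝ) 1, HasDerivWithinAt f (f' x) (Set.Icc (0 : ℝ) 1) x)
    {c d : ℝ} (hc : c ∈ Set.Icc (0 : ℝ) 1) (hd : d ∈ Set.Icc (0 : ℝ) 1) (hcd : c ≤ d)
    (x y : ℝ) (h1 : f c + f' c * (x - c) < y) (h2 : y < f d + f' d * (x - d)) :
    ∃ t ∈ Set.Icc (0 : ℝ) 1, y = f t + f' t * (x - t) := by
  have hsub : Icc c d ⊆ Icc (0 : ℝ) 1 := Icc_subset_Icc hc.1 hd.2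
  set g : ℝ → ℝ := fun s => f (projIcc (0 : ℝ) 1 zero_le_one s) with hg_def
  have hcont : ContinuousOn f (Icc (0 : ℝ) 1) := fun z hz => (hderiv z hz).continuousWithinAt
  have hg : Continuous g :=
    hcont.comp_continuous (continuous_subtype_val.comp continuous_projIcc)
      (fun s => (projIcc (0 : ℝ) 1 zero_le_one s).2)
  set F : ℝ → ℝ := fun u => ∫ s in (0:ℝ)..u, g s with hF_def
  set G : ℝ → ℝ := fun t => (x - t) * f t + 2 * F t with hG_def
  set H : ℝ → ℝ := fun t => f t + f' t * (x - t) with hH_def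
  have hG : ∀ t ∈ Icc c d, HasDerivWithinAt G (H t) (Icc c d) t := by
    intro t ht
    have ht01 : t ∈ Icc (0 : ℝ) 1 := hsub ht
    have hFd : HasDerivWithinAt F (f t) (Icc c d) t := by
      have := ((hg.integral_hasStrictDerivAt 0 t).hasDerivAt).hasDerivWithinAt (s := Icc c d)
      rwa [show g t = f t by rw [hg_def]; simp [projIcc_of_mem zero_le_one ht01]] at this
    have hprod : HasDerivWithinAt (fun t => (x - t) * f t)
        ((-1) * f t + (x - t) * f' t) (Icc c d) t :=
      (((hasDerivWithinAt_id t (Icc c d)).const_sub x).mul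
        ((hderiv t ht01).mono hsub))
    have := hprod.add (hFd.const_mul 2)
    refine this.congr_deriv ?_
    rw [hH_def]; ring
  rcases exists_hasDerivWithinAt_eq_of_gt_of_lt hcd hG (m := y) h1 h2 with ⟨t, htmem, htval⟩
  exact ⟨t, hsub (Ioo_subset_Icc_self htmem), htval.symm⟩

theorem stmt_7 (f f' : ℝ → ℝ)
    (hderiv : ∀ x ∈ Set.Icc (0 : ℝ) 1, HasDerivWithinAt f (f' x) (Set.Icc (0 : ℝ) 1) x)
    (hnc : ∃ a ∈ Set.Icc (0 : ℝ) 1, ∃ b ∈ Set.Icc (0 : ℝ) 1, f' a ≠ f' b) :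
    dimH {q : ℝ × ℝ | ∃ t ∈ Set.Icc (0 : ℝ) 1, q.2 = f t + f' t * (q.1 - t)} = 2 := by
  obtain ⟨a, ha, b, hb, hab⟩ := hnc
  obtain ⟨c, hc, d, hd, hcd, hne⟩ :
      ∃ c ∈ Icc (0:ℝ) 1, ∃ d ∈ Icc (0:ℝ) 1, c ≤ d ∧ f' c ≠ f' d := by
    rcases le_total a b with h | h
    · exact ⟨a, ha, b, hb, h, hab⟩
    · exact ⟨b, hb, a, ha, h, hab.symm⟩
  have hpq_cont : Continuous fun x : ℝ => f c + f' c * (x - c) := by fun_prop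
  have hqq_cont : Continuous fun x : ℝ => f d + f' d * (x - d) := by fun_prop
  obtain ⟨x₀, hx₀⟩ : ∃ x₀ : ℝ,
      f c + f' c * (x₀ - c) ≠ f d + f' d * (x₀ - d) := by
    by_contra h
    push_neg at h
    have h0 := h 0
    have h1 := h 1
    apply hne
    nlinarith [h0, h1]
  have hVopen : IsOpen {z : ℝ × ℝ |
      min (f c + f' c * (z.1 - c)) (f d + f' d * (z.1 - d)) < z.2 ∧
      z.2 < max (f c + f' c * (z.1 - c)) (f d + f' d * (z.1 - d))} := by
    apply IsOpen.inter
    · exact isOpen_lt ((hpq_cont.comp continuous_fst).min (hqq_cont.comp continuous_fst))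
        continuous_snd
    · exact isOpen_lt continuous_snd
        ((hpq_cont.comp continuous_fst).max (hqq_cont.comp continuous_fst))
  have hVS : {z : ℝ × ℝ |
      min (f c + f' c * (z.1 - c)) (f d + f' d * (z.1 - d)) < z.2 ∧
      z.2 < max (f c + f' c * (z.1 - c)) (f d + f' d * (z.1 - d))} ⊆
      {q : ℝ × ℝ | ∃ t ∈ Set.Icc (0 : ℝ) 1, q.2 = f t + f' t * (q.1 - t)} := by
    rintro ⟨x, y⟩ ⟨hy1, hy2⟩
    simp only [Set.mem_setOf_eq] at hy1 hy2 ⊢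
    rcases le_total (f c + f' c * (x - c)) (f d + f' d * (x - d)) with h | h
    · rw [min_eq_left h] at hy1; rw [max_eq_right h] at hy2
      exact aux_darboux f f' hderiv hc hd hcd x y hy1 hy2
    · rw [min_eq_right h] at hy1; rw [max_eq_left h] at hy2
      obtain ⟨t, ht, hval⟩ := aux_darboux (fun z => -f z) (fun z => -f' z)
        (fun z hz => (hderiv z hz).neg) hc hd hcd x (-y)
        (by show -f c + -f' c * (x - c) < -y; linarith)
        (by show -y < -f d + -f' d * (x - d); linarith)
      have hval' : -y = -f t + -f' t * (x - t) := hval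
      exact ⟨t, ht, by linarith⟩
  have hmem : {q : ℝ × ℝ | ∃ t ∈ Set.Icc (0 : ℝ) 1, q.2 = f t + f' t * (q.1 - t)} ∈
      nhds (x₀, ((f c + f' c * (x₀ - c)) + (f d + f' d * (x₀ - d))) / 2) := by
    apply Filter.mem_of_superset (hVopen.mem_nhds ?_) hVS
    have h1 : min (f c + f' c * (x₀ - c)) (f d + f' d * (x₀ - d)) <
        max (f c + f' c * (x₀ - c)) (f d + f' d * (x₀ - d)) := min_lt_max.mpr hx₀
    have h2 := min_add_max (f c + f' c * (x₀ - c)) (f d + f' d * (x₀ - d))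
    exact ⟨by simp only [Set.mem_setOf_eq]; linarith, by simp only [Set.mem_setOf_eq]; linarith⟩
  rw [Real.dimH_of_mem_nhds hmem]
  simp [Module.finrank_prod]
end

section
/- There exists a strictly increasing continuous function f : [0,1] → ℝ and a set C* ⊂ [0,1] with Hausdorff dimension 0 such that the image f([0,1] \ C*) has Hausdorff dimension 0. -/
open Set MeasureTheory Finset
open scoped NNReal ENNReal

namespace S8

noncomputable section

def Kc (n : ℕ) : ℕ := Nat.factorial (n+1) - 1

def blockOf (k : ℕ) : ℕ := Nat.findGreatest (fun n => Kc n ≤ k) k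

def eta (n : ℕ) : ℝ := (2⁻¹ : ℝ) ^ ((Nat.factorial (n+2))^2)

def wt (k : ℕ) (b : Bool) : ℝ :=
  if Even (blockOf k) then 2⁻¹ else if b then eta (blockOf k) else 1 - eta (blockOf k)

def dig (k : ℕ) (x : ℝ) : Bool := decide (⌊2^(k+1) * x⌋₊ % 2 = 1)

def cyl (m i : ℕ) : ℝ := ∏ k ∈ Finset.range m, wt k (Nat.testBit i (m - 1 - k))

def idx (m : ℕ) (x : ℝ) : ℕ := min (2^m) ⌊2^m * x⌋₊

def S (m : ℕ) (x : ℝ) : ℝ := ∑ i ∈ Finset.range (idx m x), cyl m i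

def F (x : ℝ) : ℝ := ⨆ m, S m x

-- basic Kc facts
lemma Kc_strictMono : StrictMono Kc := by
  intro a b h
  have h1 : Nat.factorial (a+1) < Nat.factorial (b+1) :=
    Nat.factorial_lt (Nat.succ_pos a) |>.2 (by omega)
  have h2 : 1 ≤ Nat.factorial (a+1) := Nat.one_le_iff_ne_zero.2 (Nat.factorial_ne_zero _)
  simp only [Kc]; omega

lemma Kc_zero : Kc 0 = 0 := rfl

lemma self_le_Kc (n : ℕ) : n ≤ Kc n := by
  have := Nat.self_le_factorial (n+1)
  simp only [Kc]; omega

lemma blockOf_le_self (k : ℕ) : Kc (blockOf k) ≤ k :=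
  Nat.findGreatest_spec (P := fun n => Kc n ≤ k) (Nat.zero_le k) (by simp [Kc_zero])

lemma lt_Kc_blockOf_succ (k : ℕ) : k < Kc (blockOf k + 1) := by
  by_contra h
  push_neg at h
  have hb : blockOf k + 1 ≤ k := le_trans (self_le_Kc _) h
  exact absurd h (by simpa [blockOf] using Nat.findGreatest_is_greatest (Nat.lt_succ_self _) hb)

lemma blockOf_eq (n k : ℕ) (h1 : Kc n ≤ k) (h2 : k < Kc (n+1)) : blockOf k = n := by
  rw [blockOf, Nat.findGreatest_eq_iff]
  refine ⟨le_trans (self_le_Kc n) h1, fun _ => h1, fun n' hn' _ => ?_⟩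
  push_neg
  calc k < Kc (n+1) := h2
    _ ≤ Kc n' := Kc_strictMono.monotone hn'

lemma blockOf_Kc (n : ℕ) : blockOf (Kc n) = n :=
  blockOf_eq n (Kc n) le_rfl (Kc_strictMono (Nat.lt_succ_self n))

-- eta facts
lemma eta_pos (n : ℕ) : 0 < eta n := pow_pos (by norm_num) _

lemma eta_le_half (n : ℕ) : eta n ≤ 2⁻¹ := by
  have h1 : 1 ≤ (Nat.factorial (n+2))^2 := Nat.one_le_iff_ne_zero.2 (pow_ne_zero _ (Nat.factorial_ne_zero _))
  calc eta n ≤ (2⁻¹:ℝ)^1 := pow_le_pow_of_le_one (by norm_num) (by norm_num) h1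
    _ = 2⁻¹ := pow_one _

lemma eta_lt_one (n : ℕ) : eta n < 1 := lt_of_le_of_lt (eta_le_half n) (by norm_num)

lemma eta_antitone : Antitone eta := by
  intro a b h
  exact pow_le_pow_of_le_one (by norm_num) (by norm_num)
    (Nat.pow_le_pow_left (Nat.factorial_le (by omega)) 2)

-- wt facts
lemma wt_pos (k : ℕ) (b : Bool) : 0 < wt k b := by
  rw [wt]
  split
  · norm_num
  · cases b
    · simpa using sub_pos.2 (eta_lt_one (blockOf k))
    · simpa using eta_pos (blockOf k)

lemma wt_le_one (k : ℕ) (b : Bool) : wt k b ≤ 1 := by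
  rw [wt]
  split
  · norm_num
  · cases b
    · simp [sub_le_self_iff, (eta_pos (blockOf k)).le]
    · simpa using (eta_lt_one (blockOf k)).le

lemma wt_add (k : ℕ) : wt k false + wt k true = 1 := by
  rw [wt, wt]
  split
  · norm_num
  · simp

lemma wt_of_even (k : ℕ) (h : Even (blockOf k)) (b : Bool) : wt k b = 2⁻¹ := by
  rw [wt, if_pos h]

-- cyl facts
lemma cyl_pos (m i : ℕ) : 0 < cyl m i := Finset.prod_pos fun k _ => wt_pos k _

lemma cyl_le_one (m i : ℕ) : cyl m i ≤ 1 :=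
  Finset.prod_le_one (fun k _ => (wt_pos k _).le) (fun k _ => wt_le_one k _)

lemma testBit_two_mul_add (i : ℕ) (b : Bool) (j : ℕ) :
    Nat.testBit (2 * i + b.toNat) (j+1) = Nat.testBit i j := by
  rw [Nat.testBit_add_one]
  congr 1
  cases b <;> simp <;> omega

lemma testBit_two_mul_add_zero (i : ℕ) (b : Bool) :
    Nat.testBit (2 * i + b.toNat) 0 = b := by
  rw [Nat.testBit_zero]
  cases b <;> simp <;> omega

lemma cyl_succ (m i : ℕ) (b : Bool) :
    cyl (m+1) (2 * i + b.toNat) = cyl m i * wt m b := by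
  rw [cyl, Finset.prod_range_succ]
  congr 1
  · apply Finset.prod_congr rfl
    intro k hk
    rw [Finset.mem_range] at hk
    have h1 : m + 1 - 1 - k = (m - 1 - k) + 1 := by omega
    rw [h1, testBit_two_mul_add]
  · rw [show m + 1 - 1 - m = 0 from by omega, testBit_two_mul_add_zero]

lemma cyl_split (m i : ℕ) : cyl (m+1) (2*i) + cyl (m+1) (2*i+1) = cyl m i := by
  have h0 := cyl_succ m i false
  have h1 := cyl_succ m i true
  simp only [Bool.toNat_false, Bool.toNat_true, add_zero] at h0 h1
  rw [h0, h1, ← mul_add, wt_add, mul_one]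

lemma pair_sum (g : ℕ → ℝ) (n : ℕ) :
    ∑ j ∈ Finset.range (2*n), g j = ∑ q ∈ Finset.range n, (g (2*q) + g (2*q+1)) := by
  induction n with
  | zero => simp
  | succ n ih =>
      have : 2*(n+1) = (2*n+1)+1 := by ring
      rw [this, Finset.sum_range_succ, Finset.sum_range_succ, Finset.sum_range_succ, ih]
      ring

lemma sum_cyl_left (m n : ℕ) :
    ∑ j ∈ Finset.range (2*n), cyl (m+1) j = ∑ j ∈ Finset.range n, cyl m j := by
  rw [pair_sum]
  exact Finset.sum_congr rfl fun q _ => cyl_split m q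

lemma sum_cyl_total (m : ℕ) : ∑ i ∈ Finset.range (2^m), cyl m i = 1 := by
  induction m with
  | zero => simp [cyl]
  | succ m ih => rw [pow_succ, mul_comm, sum_cyl_left, ih]

-- idx and dig facts
lemma idx_le_pow (m : ℕ) (x : ℝ) : idx m x ≤ 2^m := min_le_left _ _

lemma idx_eq_floor {x : ℝ} (hx1 : x ≤ 1) (m : ℕ) : idx m x = ⌊2^m * x⌋₊ := by
  rw [idx, min_eq_right]
  calc ⌊2^m * x⌋₊ ≤ ⌊(2:ℝ)^m⌋₊ := Nat.floor_mono (by nlinarith [pow_pos (by norm_num : (0:ℝ)<2) m])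
    _ = 2^m := by
        rw [show ((2:ℝ)^m) = ((2^m : ℕ) : ℝ) by push_cast; ring, Nat.floor_natCast]

lemma digit_toNat (m : ℕ) (x : ℝ) : (dig m x).toNat = ⌊2^(m+1) * x⌋₊ % 2 := by
  rw [dig]
  rcases Nat.mod_two_eq_zero_or_one ⌊2^(m+1) * x⌋₊ with h | h <;> simp [h]

lemma floor_succ_div (m : ℕ) (x : ℝ) : ⌊2^(m+1) * x⌋₊ / 2 = ⌊2^m * x⌋₊ := by
  have h : (2:ℝ)^m * x = (2^(m+1) * x) / (2:ℕ) := by push_cast; ring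
  rw [h, Nat.floor_div_natCast]

lemma idx_succ {x : ℝ} (hx1 : x ≤ 1) (m : ℕ) :
    idx (m+1) x = 2 * idx m x + (dig m x).toNat := by
  rw [idx_eq_floor hx1, idx_eq_floor hx1, digit_toNat]
  have h := Nat.div_add_mod ⌊2^(m+1) * x⌋₊ 2
  rw [floor_succ_div] at h
  omega

-- S facts
lemma S_nonneg (m : ℕ) (x : ℝ) : 0 ≤ S m x :=
  Finset.sum_nonneg fun i _ => (cyl_pos m i).le

lemma S_le_one (m : ℕ) (x : ℝ) : S m x ≤ 1 := by
  rw [← sum_cyl_total m]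
  exact Finset.sum_le_sum_of_subset_of_nonneg
    (Finset.range_subset_range.2 (idx_le_pow m x)) (fun i _ _ => (cyl_pos m i).le)

lemma idx_mono (m : ℕ) : Monotone (idx m) := fun x y h =>
  min_le_min le_rfl (Nat.floor_mono (by nlinarith [pow_pos (by norm_num : (0:ℝ)<2) m]))

lemma S_mono_x (m : ℕ) : Monotone (S m) := fun x y h =>
  Finset.sum_le_sum_of_subset_of_nonneg
    (Finset.range_subset_range.2 (idx_mono m h)) (fun i _ _ => (cyl_pos m i).le)

lemma S_succ {x : ℝ} (hx1 : x ≤ 1) (m : ℕ) :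
    S (m+1) x = S m x + (dig m x).toNat * cyl (m+1) (2 * idx m x) := by
  rw [S, idx_succ hx1]
  cases h : dig m x
  · simp only [Bool.toNat_false, add_zero, zero_mul, Nat.cast_zero]
    rw [S, sum_cyl_left]
  · simp only [Bool.toNat_true, one_mul, Nat.cast_one]
    rw [Finset.sum_range_succ, S, sum_cyl_left]

def gs (m : ℕ) (x : ℝ) : ℝ := S m x + cyl m (idx m x)

lemma S_le_succ {x : ℝ} (hx1 : x ≤ 1) (m : ℕ) : S m x ≤ S (m+1) x := by
  rw [S_succ hx1]
  have := cyl_pos (m+1) (2 * idx m x)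
  cases h : dig m x <;> simp <;> nlinarith

lemma gs_succ_le {x : ℝ} (hx1 : x ≤ 1) (m : ℕ) : gs (m+1) x ≤ gs m x := by
  rw [gs, gs, S_succ hx1, idx_succ hx1]
  cases h : dig m x
  · simp only [Bool.toNat_false, add_zero, zero_mul, Nat.cast_zero]
    have h2 : cyl (m+1) (2 * idx m x) = cyl m (idx m x) * wt m false := by
      simpa using cyl_succ m (idx m x) false
    have h3 := mul_le_of_le_one_right (cyl_pos m (idx m x)).le (wt_le_one m false)
    linarith
  · simp only [Bool.toNat_true, one_mul, Nat.cast_one]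
    have := cyl_split m (idx m x)
    linarith

lemma S_le_of_le {x : ℝ} (hx1 : x ≤ 1) {m m' : ℕ} (h : m ≤ m') : S m x ≤ S m' x := by
  induction m', h using Nat.le_induction with
  | base => exact le_rfl
  | succ n hn ih => exact le_trans ih (S_le_succ hx1 n)

lemma gs_le_of_le {x : ℝ} (hx1 : x ≤ 1) {m m' : ℕ} (h : m ≤ m') : gs m' x ≤ gs m x := by
  induction m', h using Nat.le_induction with
  | base => exact le_rfl
  | succ n hn ih => exact le_trans (gs_succ_le hx1 n) ih

lemma bddAbove_S (x : ℝ) : BddAbove (Set.range fun m => S m x) := by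
  refine ⟨1, ?_⟩
  rintro _ ⟨m, rfl⟩
  exact S_le_one m x

lemma le_F (m : ℕ) (x : ℝ) : S m x ≤ F x := le_ciSup (bddAbove_S x) m

lemma F_le_gs {x : ℝ} (hx1 : x ≤ 1) (m : ℕ) : F x ≤ gs m x := by
  refine ciSup_le fun m' => ?_
  rcases le_total m' m with h | h
  · calc S m' x ≤ S m x := S_le_of_le hx1 h
      _ ≤ gs m x := le_add_of_nonneg_right (cyl_pos m (idx m x)).le
  · calc S m' x ≤ gs m' x := le_add_of_nonneg_right (cyl_pos m' (idx m' x)).le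
      _ ≤ gs m x := gs_le_of_le hx1 h

lemma F_mono : Monotone F := fun x y h =>
  ciSup_mono (bddAbove_S y) (fun m => S_mono_x m h)

lemma F_nonneg (x : ℝ) : 0 ≤ F x := le_trans (S_nonneg 0 x) (le_F 0 x)

-- dyadic values
lemma dig_dyadic {i m k : ℕ} (h : m ≤ k) : dig k ((i:ℝ)/2^m) = false := by
  have hcast : (2:ℝ)^(k+1) * ((i:ℝ)/2^m) = ((i * 2^(k+1-m) : ℕ) : ℝ) := by
    push_cast
    rw [mul_comm, div_mul_eq_mul_div, mul_comm]
    rw [show k+1-m = k+1-m from rfl]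
    have h2 : (2:ℝ)^(k+1-m) * (2:ℝ)^m = (2:ℝ)^(k+1) := by
      rw [← pow_add]; congr 1; omega
    field_simp
    nlinarith [pow_pos (by norm_num : (0:ℝ)<2) m]
  rw [dig, hcast, Nat.floor_natCast]
  have hdvd : 2 ∣ i * 2^(k+1-m) := Dvd.dvd.mul_left (dvd_pow_self 2 (by omega)) i
  obtain ⟨c, hc⟩ := hdvd
  have h3 : (i * 2^(k+1-m)) % 2 = 0 := by omega
  simp [h3]

lemma idx_dyadic {i m : ℕ} (hi : i ≤ 2^m) : idx m ((i:ℝ)/2^m) = i := by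
  have hpos : (0:ℝ) < 2^m := pow_pos (by norm_num) m
  have : (2:ℝ)^m * ((i:ℝ)/2^m) = (i:ℝ) := by field_simp
  rw [idx, this, Nat.floor_natCast, min_eq_right hi]

lemma dyadic_mem {i m : ℕ} (hi : i ≤ 2^m) : ((i:ℝ)/2^m) ∈ Set.Icc (0:ℝ) 1 := by
  have hpos : (0:ℝ) < 2^m := pow_pos (by norm_num) m
  constructor
  · positivity
  · rw [div_le_one hpos]
    calc ((i:ℝ)) ≤ ((2^m : ℕ) : ℝ) := by exact_mod_cast hi
      _ = 2^m := by push_cast; ring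

lemma F_dyadic {i m : ℕ} (hi : i ≤ 2^m) :
    F ((i:ℝ)/2^m) = ∑ j ∈ Finset.range i, cyl m j := by
  set x := (i:ℝ)/2^m with hx
  have hx1 : x ≤ 1 := (dyadic_mem hi).2
  have hSm : S m x = ∑ j ∈ Finset.range i, cyl m j := by
    rw [S, idx_dyadic hi]
  have hstab : ∀ t, S (m+t) x = S m x := by
    intro t
    induction t with
    | zero => rfl
    | succ t ih =>
        rw [show m+(t+1) = (m+t)+1 from rfl, S_succ hx1, ih,
          dig_dyadic (by omega : m ≤ m+t)]
        simp
  refine le_antisymm (ciSup_le fun m' => ?_) (by rw [← hSm]; exact le_F m x)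
  rcases le_total m' m with h | h
  · rw [← hSm]; exact S_le_of_le hx1 h
  · rw [← hSm, ← show m + (m'-m) = m' from by omega] at *
    rw [hstab (m'-m)]

lemma F_zero : F 0 = 0 := by
  have h := F_dyadic (i := 0) (m := 0) (by norm_num)
  simpa using h

lemma F_one : F 1 = 1 := by
  have h := F_dyadic (i := 2^0) (m := 0) le_rfl
  simp only [pow_zero, Nat.cast_one, div_one] at h
  rw [h]
  simpa using sum_cyl_total 0

lemma F_strictMonoOn : StrictMonoOn F (Set.Icc (0:ℝ) 1) := by
  rintro x ⟨hx0, hx1⟩ y ⟨hy0, hy1⟩ hxy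
  obtain ⟨m, hm⟩ : ∃ m : ℕ, 2 < 2^m * (y - x) := by
    obtain ⟨m, hm⟩ := pow_unbounded_of_one_lt (2 / (y - x)) (by norm_num : (1:ℝ) < 2)
    exact ⟨m, by rw [div_lt_iff₀ (by linarith)] at hm; linarith⟩
  obtain ⟨j, hj⟩ : ∃ j, j = ⌊2^m * x⌋₊ + 1 := ⟨_, rfl⟩
  have hpos : (0:ℝ) < 2^m := pow_pos (by norm_num) m
  have hfl : (⌊2^m * x⌋₊ : ℝ) ≤ 2^m * x := Nat.floor_le (by positivity)
  have hfl2 : 2^m * x < (⌊2^m * x⌋₊ : ℝ) + 1 := Nat.lt_floor_add_one _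
  have hj1 : (j:ℝ) + 1 ≤ 2^m * y := by rw [hj]; push_cast; linarith
  have hj2m : j + 1 ≤ 2^m := by
    have h5 : ((j+1:ℕ):ℝ) ≤ ((2^m:ℕ):ℝ) := by push_cast; nlinarith
    exact_mod_cast h5
  have hjr : (j:ℝ) = (⌊2^m * x⌋₊:ℝ) + 1 := by rw [hj]; push_cast; ring
  have hxa : x ≤ (j:ℝ)/2^m := by
    rw [le_div_iff₀ hpos]; push_cast; linarith
  have hby : ((j:ℝ)+1)/2^m ≤ y := by
    rw [div_le_iff₀ hpos]; linarith
  have hFab : F ((j:ℝ)/2^m) < F (((j:ℝ)+1)/2^m) := by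
    rw [F_dyadic (by omega : j ≤ 2^m),
      show ((j:ℝ)+1) = ((j+1 : ℕ):ℝ) from by push_cast; ring,
      F_dyadic (by omega : j+1 ≤ 2^m), Finset.sum_range_succ]
    linarith [cyl_pos m j]
  calc F x ≤ F ((j:ℝ)/2^m) := F_mono hxa
    _ < F (((j:ℝ)+1)/2^m) := hFab
    _ ≤ F y := F_mono hby

-- continuity
def kap (m : ℕ) : ℝ := (2⁻¹:ℝ) ^ ((Finset.range m).filter (fun k => Even (blockOf k))).card

lemma cyl_le_kap (m i : ℕ) : cyl m i ≤ kap m := by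
  have h1 : cyl m i ≤ ∏ k ∈ Finset.range m, (if Even (blockOf k) then (2⁻¹:ℝ) else 1) := by
    apply Finset.prod_le_prod (fun k _ => (wt_pos k _).le)
    intro k _
    by_cases h : Even (blockOf k)
    · rw [if_pos h, wt_of_even k h]
    · rw [if_neg h]; exact wt_le_one k _
  calc cyl m i ≤ _ := h1
    _ = kap m := by rw [← Finset.prod_filter, Finset.prod_const, kap]

lemma card_unif_ge (c : ℕ) :
    c ≤ ((Finset.range (Kc (2*c))).filter (fun k => Even (blockOf k))).card := by
  have hinj : Function.Injective (fun j => Kc (2*j)) := by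
    intro a b h
    have := Kc_strictMono.injective h
    omega
  have hsub : (Finset.range c).image (fun j => Kc (2*j)) ⊆
      (Finset.range (Kc (2*c))).filter (fun k => Even (blockOf k)) := by
    intro k hk
    simp only [Finset.mem_image, Finset.mem_range] at hk
    obtain ⟨j, hj, rfl⟩ := hk
    rw [Finset.mem_filter, Finset.mem_range]
    exact ⟨Kc_strictMono (by omega), by rw [blockOf_Kc]; exact even_two_mul j⟩
  calc c = ((Finset.range c).image (fun j => Kc (2*j))).card := by
            rw [Finset.card_image_of_injective _ hinj, Finset.card_range]
    _ ≤ _ := Finset.card_le_card hsub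

lemma kap_small {ε : ℝ} (hε : 0 < ε) : ∃ m : ℕ, kap m < ε := by
  obtain ⟨c, hc⟩ := exists_pow_lt_of_lt_one hε (by norm_num : (2⁻¹:ℝ) < 1)
  refine ⟨Kc (2*c), lt_of_le_of_lt ?_ hc⟩
  exact pow_le_pow_of_le_one (by norm_num) (by norm_num) (card_unif_ge c)

lemma F_sub_le {x y : ℝ} (m : ℕ) (hx0 : 0 ≤ x) (hy1 : y ≤ 1) (hxy : x ≤ y)
    (hclose : y ≤ x + (2⁻¹:ℝ)^m) : F y - F x ≤ 2 * kap m := by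
  have hidx : idx m y ≤ idx m x + 1 := by
    have h1 : (2:ℝ)^m * y ≤ 2^m * x + 1 := by
      have h2 : (2:ℝ)^m * (2⁻¹)^m = 1 := by
        rw [← mul_pow]; norm_num
      nlinarith [pow_pos (by norm_num : (0:ℝ)<2) m]
    have h3 : ⌊2^m * y⌋₊ ≤ ⌊2^m * x⌋₊ + 1 := by
      calc ⌊2^m * y⌋₊ ≤ ⌊2^m * x + 1⌋₊ := Nat.floor_mono h1
        _ = ⌊2^m * x⌋₊ + 1 := Nat.floor_add_one (by positivity)
    rw [idx, idx]; omega
  have hFy : F y ≤ S m y + cyl m (idx m y) := F_le_gs hy1 m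
  have hFx : S m x ≤ F x := le_F m x
  have hk1 : cyl m (idx m y) ≤ kap m := cyl_le_kap m _
  rcases le_or_gt (idx m y) (idx m x) with h | h
  · have : S m y ≤ S m x := Finset.sum_le_sum_of_subset_of_nonneg
      (Finset.range_subset_range.2 h) (fun i _ _ => (cyl_pos m i).le)
    have hk0 : 0 < kap m := pow_pos (by norm_num) _
    linarith
  · have heq : idx m y = idx m x + 1 := by omega
    have : S m y = S m x + cyl m (idx m x) := by
      rw [S, heq, Finset.sum_range_succ, S]
    have hk2 : cyl m (idx m x) ≤ kap m := cyl_le_kap m _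
    linarith

lemma F_continuousOn : ContinuousOn F (Set.Icc (0:ℝ) 1) := by
  rw [Metric.continuousOn_iff]
  rintro b ⟨hb0, hb1⟩ ε hε
  obtain ⟨m, hm⟩ := kap_small (by linarith : (0:ℝ) < ε/2)
  refine ⟨(2⁻¹:ℝ)^m, pow_pos (by norm_num) m, ?_⟩
  rintro a ⟨ha0, ha1⟩ hab
  rw [Real.dist_eq] at hab ⊢
  rcases le_total a b with h | h
  · have h2 : b ≤ a + (2⁻¹:ℝ)^m := by
      rw [abs_of_nonpos (by linarith)] at hab; linarith
    have h3 := F_sub_le m ha0 hb1 h h2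
    have h4 : F a ≤ F b := F_mono h
    rw [abs_of_nonpos (by linarith)]
    linarith
  · have h2 : a ≤ b + (2⁻¹:ℝ)^m := by
      rw [abs_of_nonneg (by linarith)] at hab; linarith
    have h3 := F_sub_le m hb0 ha1 h h2
    have h4 : F b ≤ F a := F_mono h
    rw [abs_of_nonneg (by linarith)]
    linarith

-- digit product identity
lemma cyl_idx_eq {x : ℝ} (hx1 : x ≤ 1) (m : ℕ) :
    cyl m (idx m x) = ∏ k ∈ Finset.range m, wt k (dig k x) := by
  induction m with
  | zero => simp [cyl]
  | succ m ih =>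
      rw [idx_succ hx1, cyl_succ, ih, Finset.prod_range_succ]

lemma cyl_idx_le_eta {x : ℝ} (hx1 : x ≤ 1) {k m : ℕ} (hk : k < m)
    (hd : dig k x = true) (hodd : ¬ Even (blockOf k)) :
    cyl m (idx m x) ≤ eta (blockOf k) := by
  rw [cyl_idx_eq hx1]
  have hmem : k ∈ Finset.range m := Finset.mem_range.2 hk
  have h1 : ∏ j ∈ Finset.range m, wt j (dig j x)
      = wt k (dig k x) * ∏ j ∈ (Finset.range m).erase k, wt j (dig j x) :=
    (Finset.mul_prod_erase _ _ hmem).symm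
  have h2 : ∏ j ∈ (Finset.range m).erase k, wt j (dig j x) ≤ 1 :=
    Finset.prod_le_one (fun j _ => (wt_pos j _).le) (fun j _ => wt_le_one j _)
  have h3 : wt k (dig k x) = eta (blockOf k) := by rw [hd, wt, if_neg hodd, if_pos rfl]
  calc ∏ j ∈ Finset.range m, wt j (dig j x) ≤ wt k (dig k x) * 1 := by
        rw [h1]
        exact mul_le_mul_of_nonneg_left h2 (wt_pos k _).le
    _ = eta (blockOf k) := by rw [h3, mul_one]

lemma dig_one (k : ℕ) : dig k 1 = false := by
  rw [dig, mul_one, show ((2:ℝ)^(k+1)) = ((2^(k+1) : ℕ) : ℝ) from by push_cast; ring,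
    Nat.floor_natCast]
  have : 2^(k+1) % 2 = 0 := by
    have : (2:ℕ) ∣ 2^(k+1) := dvd_pow_self 2 (by omega)
    omega
  simp [this]

-- zero digits propagate
lemma idx_of_zero_digits {x : ℝ} (hx1 : x ≤ 1) {a t : ℕ}
    (h : ∀ k, a ≤ k → k < a + t → dig k x = false) :
    idx (a + t) x = 2^t * idx a x := by
  induction t with
  | zero => simp
  | succ t ih =>
      rw [show a + (t+1) = (a+t)+1 from rfl, idx_succ hx1,
        ih (fun k h1 h2 => h k h1 (by omega)), h (a+t) (by omega) (by omega)]
      simp [pow_succ]; ring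

-- the exceptional set
def CN (N : ℕ) : Set ℝ :=
  {x ∈ Set.Icc (0:ℝ) 1 | ∀ n k, Odd n → N ≤ n → Kc n ≤ k → k < Kc (n+1) → dig k x = false}

def Cs : Set ℝ := ⋃ N, CN N

lemma Cs_subset : Cs ⊆ Set.Icc (0:ℝ) 1 := by
  rintro x hx
  obtain ⟨N, hN⟩ := Set.mem_iUnion.1 hx
  exact hN.1

-- dimH criterion
lemma dimH_eq_zero_of_measure {s : Set ℝ} (h : ∀ d : ℝ≥0, 0 < d → μH[(d:ℝ)] s = 0) :
    dimH s = 0 := by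
  by_contra hs
  have h0 : 0 < dimH s := pos_iff_ne_zero.2 hs
  obtain ⟨r, hr0, hrs⟩ := ENNReal.lt_iff_exists_nnreal_btwn.1 h0
  have : dimH s ≤ r := dimH_le_of_hausdorffMeasure_ne_top (by rw [h r (by exact_mod_cast hr0)]; simp)
  exact absurd (lt_of_le_of_lt this hrs) (lt_irrefl _)

-- power inequality
lemma pow_ineq {p q v : ℕ} {d : ℝ} (hd : 0 < d) (h : (p:ℝ) + v ≤ d * q) :
    (2:ℝ)^p * ((2⁻¹:ℝ)^q)^d ≤ (2⁻¹:ℝ)^v := by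
  have h2 : ((2⁻¹:ℝ)^q) = (2:ℝ) ^ (-(q:ℝ)) := by
    rw [← Real.rpow_natCast (2⁻¹:ℝ) q, Real.inv_rpow (by norm_num), ← Real.rpow_neg (by norm_num)]
  have h3 : ((2⁻¹:ℝ)^v) = (2:ℝ) ^ (-(v:ℝ)) := by
    rw [← Real.rpow_natCast (2⁻¹:ℝ) v, Real.inv_rpow (by norm_num), ← Real.rpow_neg (by norm_num)]
  rw [h2, h3, ← Real.rpow_natCast 2 p, ← Real.rpow_mul (by norm_num : (0:ℝ) ≤ 2),
    ← Real.rpow_add (by norm_num : (0:ℝ) < 2)]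
  rw [Real.rpow_le_rpow_left_iff (by norm_num : (1:ℝ) < 2)]
  nlinarith

lemma ofReal_half_pow (q : ℕ) : ENNReal.ofReal ((2⁻¹:ℝ)^q) = (2⁻¹:ℝ≥0∞)^q := by
  rw [ENNReal.ofReal_pow (by norm_num)]
  congr 1
  rw [ENNReal.ofReal_inv_of_pos (by norm_num)]
  norm_num

lemma half_pow_tendsto : Filter.Tendsto (fun ν : ℕ => (2⁻¹:ℝ≥0∞)^ν) Filter.atTop (nhds 0) :=
  ENNReal.tendsto_pow_atTop_nhds_zero_of_lt_one (by
    rw [ENNReal.inv_lt_one]; exact ENNReal.one_lt_two)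

lemma Kc_succ_eq (n : ℕ) : Kc (n+1) + 1 = (n+2) * (Kc n + 1) := by
  have h1 : 1 ≤ Nat.factorial (n+1) := Nat.one_le_iff_ne_zero.2 (Nat.factorial_ne_zero _)
  have h2 : 1 ≤ Nat.factorial (n+2) := Nat.one_le_iff_ne_zero.2 (Nat.factorial_ne_zero _)
  have h3 : Nat.factorial (n+2) = (n+2) * Nat.factorial (n+1) := Nat.factorial_succ _
  have h4 : Kc (n+1) + 1 = Nat.factorial (n+2) := by
    simp only [Kc, show n+1+1 = n+2 from rfl]; omega
  have h5 : Kc n + 1 = Nat.factorial (n+1) := by simp only [Kc]; omega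
  rw [h4, h5, h3]

lemma dimH_CN (N : ℕ) : dimH (CN N) = 0 := by
  apply dimH_eq_zero_of_measure
  intro d hd
  have hd' : (0:ℝ) < d := hd
  -- cover data
  set nn : ℕ → ℕ := fun ν => 2*(ν+N)+1 with hnn
  set a : ℕ → ℕ := fun ν => Kc (nn ν) with ha
  set b : ℕ → ℕ := fun ν => Kc (nn ν + 1) with hb
  have hab : ∀ ν, a ν ≤ b ν := fun ν => (Kc_strictMono (Nat.lt_succ_self _)).le
  have hbig : ∀ ν, ν ≤ a ν := fun ν =>
    le_trans (by simp only [hnn]; omega) (self_le_Kc (nn ν))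
  have hbig2 : ∀ ν, ν ≤ b ν := fun ν => le_trans (hbig ν) (hab ν)
  set t : ∀ ν : ℕ, Fin (2^(a ν)+1) → Set ℝ :=
    fun ν i => Set.Icc ((i:ℝ)*(2⁻¹)^(a ν)) ((i:ℝ)*(2⁻¹)^(a ν) + (2⁻¹)^(b ν)) with hts
  set r : ℕ → ℝ≥0∞ := fun ν => ENNReal.ofReal ((2⁻¹:ℝ)^(b ν)) with hrr
  have hdiam : ∀ ν i, EMetric.diam (t ν i) = ENNReal.ofReal ((2⁻¹:ℝ)^(b ν)) := by
    intro ν i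
    rw [hts]
    simp only []
    rw [EMetric.diam, Real.ediam_Icc, add_sub_cancel_left]
  have hr : Filter.Tendsto r Filter.atTop (nhds 0) := by
    apply tendsto_of_tendsto_of_tendsto_of_le_of_le
      (tendsto_const_nhds (x := (0:ℝ≥0∞))) half_pow_tendsto (fun ν => zero_le)
    intro ν
    rw [hrr]
    simp only []
    rw [ofReal_half_pow]
    exact pow_le_pow_right_of_le_one' (ENNReal.inv_le_one.2 one_le_two) (hbig2 ν)
  have ht : ∀ ν, ∀ i, EMetric.diam (t ν i) ≤ r ν := by
    intro ν i
    rw [hdiam]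
  have hst : ∀ ν, CN N ⊆ ⋃ i, t ν i := by
    intro ν x hx
    obtain ⟨⟨hx0, hx1⟩, hdig⟩ := hx
    have hj2 : idx (a ν) x ≤ 2^(a ν) := idx_le_pow _ x
    refine Set.mem_iUnion.2 ⟨⟨idx (a ν) x, by omega⟩, ?_⟩
    have hpa : (0:ℝ) < 2^(a ν) := pow_pos (by norm_num) _
    have hpb : (0:ℝ) < 2^(b ν) := pow_pos (by norm_num) _
    have hfl : ((idx (a ν) x : ℝ)) ≤ 2^(a ν) * x := by
      rw [idx_eq_floor hx1]
      exact Nat.floor_le (by positivity)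
    have hinva : (2:ℝ)^(a ν) * (2⁻¹)^(a ν) = 1 := by
      rw [← mul_pow]; norm_num
    have hinvb : (2:ℝ)^(b ν) * (2⁻¹)^(b ν) = 1 := by
      rw [← mul_pow]; norm_num
    constructor
    · simp only []
      nlinarith [pow_pos (by norm_num : (0:ℝ) < 2⁻¹) (a ν)]
    · -- zero digits in block nn ν
      have hzero : ∀ k, a ν ≤ k → k < a ν + (b ν - a ν) → dig k x = false := by
        intro k h1 h2
        exact hdig (nn ν) k (by rw [hnn]; exact odd_two_mul_add_one _)
          (by simp only [hnn]; omega) h1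
          (by have := hab ν; simp only [ha, hb] at *; omega)
      have hidxb : idx (a ν + (b ν - a ν)) x = 2^(b ν - a ν) * idx (a ν) x :=
        idx_of_zero_digits hx1 hzero
      rw [show a ν + (b ν - a ν) = b ν from by have := hab ν; omega] at hidxb
      have hup : 2^(b ν) * x < (idx (b ν) x : ℝ) + 1 := by
        rw [idx_eq_floor hx1]
        exact Nat.lt_floor_add_one _
      rw [hidxb] at hup
      push_cast at hup
      have hsplit : (2:ℝ)^(b ν - a ν) * (2⁻¹)^(b ν) = (2⁻¹)^(a ν) := by
        have h7 : (2:ℝ)^(b ν - a ν) * (2:ℝ)^(a ν) = 2^(b ν) := by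
          rw [← pow_add]
          congr 1
          have := hab ν
          omega
        have h8 : (0:ℝ) < (2⁻¹:ℝ)^(a ν) := pow_pos (by norm_num) _
        have h9 : (0:ℝ) < (2⁻¹:ℝ)^(b ν) := pow_pos (by norm_num) _
        nlinarith
      simp only []
      nlinarith [pow_pos (by norm_num : (0:ℝ) < 2⁻¹) (b ν), mul_pos hpb
        (pow_pos (by norm_num : (0:ℝ) < 2⁻¹) (b ν))]
  -- apply the covering bound
  have hμ := MeasureTheory.Measure.hausdorffMeasure_le_liminf_sum (d:ℝ) (CN N) r hr t
    (Filter.Eventually.of_forall ht) (Filter.Eventually.of_forall hst)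
  -- bound the sums
  have hsum : ∀ᶠ ν in Filter.atTop,
      (∑ i : Fin (2^(a ν)+1), EMetric.diam (t ν i) ^ (d:ℝ)) ≤ (2⁻¹:ℝ≥0∞)^ν := by
    have hev : ∀ᶠ ν in Filter.atTop, (2:ℝ) ≤ d * (nn ν + 1) := by
      filter_upwards [Filter.eventually_ge_atTop ⌈(2:ℝ)/d⌉₊] with ν hν
      have h1 : (2:ℝ)/d ≤ ⌈(2:ℝ)/d⌉₊ := Nat.le_ceil _
      have h2 : ((⌈(2:ℝ)/d⌉₊:ℝ)) ≤ ν := by exact_mod_cast hν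
      have h3 : (2:ℝ)/d ≤ nn ν + 1 := by
        have : (ν:ℝ) ≤ nn ν + 1 := by
          have : ν ≤ nn ν + 1 := by simp only [hnn]; omega
          exact_mod_cast this
        linarith
      rw [div_le_iff₀ hd'] at h3
      linarith
    filter_upwards [hev] with ν hν
    have hcard : (∑ i : Fin (2^(a ν)+1), EMetric.diam (t ν i) ^ (d:ℝ))
        = (2^(a ν)+1 : ℕ) * (ENNReal.ofReal ((2⁻¹:ℝ)^(b ν))) ^ (d:ℝ) := by
      rw [Finset.sum_congr rfl (fun i _ => by rw [hdiam])]
      rw [Finset.sum_const, Finset.card_univ, Fintype.card_fin, nsmul_eq_mul]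
    rw [hcard]
    -- numeric inequality
    have hnat1 : (nn ν + 1) * (a ν + 1) ≤ b ν := by
      have h5 := Kc_succ_eq (nn ν)
      have h6 : (nn ν + 2) * (Kc (nn ν) + 1) = (nn ν + 1) * (Kc (nn ν) + 1) + (Kc (nn ν) + 1) := by
        ring
      simp only [ha, hb]
      omega
    have hreal : ((2:ℝ)^(a ν) + 1) * (((2⁻¹:ℝ)^(b ν)) ^ (d:ℝ)) ≤ (2⁻¹:ℝ)^ν := by
      have hp1 : ((2:ℝ)^(a ν) + 1) ≤ (2:ℝ)^(a ν + 1) := by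
        have : (1:ℝ) ≤ 2^(a ν) := one_le_pow₀ (by norm_num)
        rw [pow_succ]
        linarith
      have hp2 : ((2:ℝ)^(a ν + 1)) * (((2⁻¹:ℝ)^(b ν)) ^ (d:ℝ)) ≤ (2⁻¹:ℝ)^ν := by
        apply pow_ineq hd'
        -- (a ν + 1 : ℝ) + ν ≤ d * b ν
        have c1 : ((nn ν:ℝ) + 1) * ((a ν:ℝ) + 1) ≤ (b ν : ℝ) := by
          have := hnat1
          push_cast [← Nat.cast_mul]
          exact_mod_cast hnat1
        have c2 : (ν:ℝ) ≤ (a ν : ℝ) := by exact_mod_cast hbig ν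
        have c3 : (2:ℝ) * ((a ν : ℝ) + 1) ≤ (d:ℝ) * (((nn ν:ℝ) + 1) * ((a ν:ℝ) + 1)) := by
          nlinarith [hν, (Nat.cast_nonneg (a ν) : (0:ℝ) ≤ (a ν:ℝ))]
        have c4 : (d:ℝ) * (((nn ν:ℝ) + 1) * ((a ν:ℝ) + 1)) ≤ (d:ℝ) * (b ν : ℝ) :=
          mul_le_mul_of_nonneg_left c1 hd'.le
        push_cast
        linarith
      have hpow_nonneg : (0:ℝ) ≤ ((2⁻¹:ℝ)^(b ν)) ^ (d:ℝ) :=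
        Real.rpow_nonneg (by positivity) _
      nlinarith
    calc ((2^(a ν)+1 : ℕ) : ℝ≥0∞) * (ENNReal.ofReal ((2⁻¹:ℝ)^(b ν))) ^ (d:ℝ)
        = ENNReal.ofReal (((2:ℝ)^(a ν) + 1) * (((2⁻¹:ℝ)^(b ν)) ^ (d:ℝ))) := by
          rw [ENNReal.ofReal_rpow_of_pos (by positivity)] at *
          rw [← ENNReal.ofReal_natCast (2^(a ν)+1), ← ENNReal.ofReal_mul (by positivity)]
          congr 1
          push_cast
          ring
      _ ≤ ENNReal.ofReal ((2⁻¹:ℝ)^ν) := ENNReal.ofReal_le_ofReal hreal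
      _ = (2⁻¹:ℝ≥0∞)^ν := ofReal_half_pow ν
  refine le_antisymm ?_ (zero_le)
  calc μH[(d:ℝ)] (CN N) ≤ _ := hμ
    _ ≤ Filter.liminf (fun ν : ℕ => (2⁻¹:ℝ≥0∞)^ν) Filter.atTop := Filter.liminf_le_liminf hsum
    _ = 0 := half_pow_tendsto.liminf_eq

lemma dimH_Cs : dimH Cs = 0 := by
  rw [Cs, dimH_iUnion]
  simp [dimH_CN]

lemma eta_le_half_pow (n : ℕ) : eta n ≤ (2⁻¹:ℝ)^n := by
  apply pow_le_pow_of_le_one (by norm_num) (by norm_num)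
  calc n ≤ n+2 := by omega
    _ ≤ Nat.factorial (n+2) := Nat.self_le_factorial _
    _ ≤ (Nat.factorial (n+2))^2 := by
        nlinarith [Nat.factorial_pos (n+2)]

lemma x_lt_one_of_dig {x : ℝ} (hx1 : x ≤ 1) {k : ℕ} (hd : dig k x = true) : x < 1 := by
  rcases lt_or_eq_of_le hx1 with h | h
  · exact h
  · rw [h, dig_one] at hd; exact absurd hd (by simp)

lemma dimH_image : dimH (F '' (Set.Icc (0:ℝ) 1 \ Cs)) = 0 := by
  apply dimH_eq_zero_of_measure
  intro d hd
  have hd' : (0:ℝ) < d := hd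
  set M : ℕ → ℕ := fun n => Kc (n+1) with hM
  set cond : ℕ → ℕ × ℕ → Prop := fun N p =>
    p.2 + 1 ≤ 2^(M (N+p.1)) ∧ ∃ x ∈ Set.Icc (0:ℝ) 1, idx (M (N+p.1)) x = p.2 ∧
      ∃ k, Kc (N+p.1) ≤ k ∧ k < Kc (N+p.1+1) ∧ dig k x = true ∧ ¬ Even (blockOf k) with hcond
  have hdec : ∀ N p, Decidable (cond N p) := fun N p => Classical.dec _
  set t : ℕ → ℕ × ℕ → Set ℝ := fun N p =>
    if cond N p then
      Set.Icc (F ((p.2:ℝ)/2^(M (N+p.1)))) (F (((p.2:ℝ)+1)/2^(M (N+p.1)))) else ∅ with ht_def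
  set r : ℕ → ℝ≥0∞ := fun N => ENNReal.ofReal (eta N) with hr_def
  -- diameter bound
  have hdiam : ∀ N p, EMetric.diam (t N p) ≤ ENNReal.ofReal (eta (N + p.1)) := by
    intro N p
    rw [ht_def]
    simp only []
    split
    · next hc =>
        obtain ⟨hp2, x, hxIcc, hidx, k, hk1, hk2, hk3, hk4⟩ := hc
        have hkM : k < M (N+p.1) := by
          have h9 : Kc (N+p.1+1) ≤ M (N+p.1) := le_rfl
          omega
        have hF : F (((p.2:ℝ)+1)/2^(M (N+p.1))) - F ((p.2:ℝ)/2^(M (N+p.1)))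
            = cyl (M (N+p.1)) p.2 := by
          rw [show ((p.2:ℝ)+1) = ((p.2+1 : ℕ):ℝ) from by push_cast; ring,
            F_dyadic hp2, F_dyadic (by omega), Finset.sum_range_succ]
          ring
        rw [EMetric.diam, Real.ediam_Icc, hF, ← hidx]
        apply ENNReal.ofReal_le_ofReal
        calc cyl (M (N+p.1)) (idx (M (N+p.1)) x) ≤ eta (blockOf k) :=
              cyl_idx_le_eta hxIcc.2 hkM hk3 hk4
          _ = eta (N+p.1) := by rw [blockOf_eq (N+p.1) k hk1 hk2]
    · simp [EMetric.diam]
  have hdiam' : ∀ N p, EMetric.diam (t N p) ≤ r N := by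
    intro N p
    refine le_trans (hdiam N p) (ENNReal.ofReal_le_ofReal ?_)
    exact eta_antitone (by omega)
  have hr : Filter.Tendsto r Filter.atTop (nhds 0) := by
    apply tendsto_of_tendsto_of_tendsto_of_le_of_le
      (tendsto_const_nhds (x := (0:ℝ≥0∞))) half_pow_tendsto (fun ν => zero_le)
    intro N
    rw [hr_def]
    simp only []
    rw [← ofReal_half_pow]
    exact ENNReal.ofReal_le_ofReal (eta_le_half_pow N)
  -- covering
  have hst : ∀ N, F '' (Set.Icc (0:ℝ) 1 \ Cs) ⊆ ⋃ p, t N p := by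
    intro N z hz
    obtain ⟨x, hx, rfl⟩ := hz
    obtain ⟨hxIcc, hxC⟩ := hx
    have hxCN : x ∉ CN N := fun h => hxC (Set.mem_iUnion.2 ⟨N, h⟩)
    rw [CN] at hxCN
    simp only [Set.mem_setOf_eq, not_and, not_forall] at hxCN
    obtain ⟨n, k, hodd, hNn, hk1, hk2, hdig⟩ := hxCN hxIcc
    have hdig' : dig k x = true := by
      cases h : dig k x
      · exact absurd h hdig
      · rfl
    have hxlt : x < 1 := x_lt_one_of_dig hxIcc.2 hdig'
    set i := idx (M n) x with hi
    have hilt : i + 1 ≤ 2^(M n) := by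
      rw [hi, idx_eq_floor hxIcc.2]
      have hlt : (2:ℝ)^(M n) * x < ((2^(M n) : ℕ):ℝ) := by
        push_cast
        nlinarith [pow_pos (by norm_num : (0:ℝ)<2) (M n)]
      have h9 : ⌊(2:ℝ)^(M n) * x⌋₊ < 2^(M n) :=
        (Nat.floor_lt (mul_nonneg (pow_nonneg (by norm_num) _) hxIcc.1)).2 hlt
      omega
    refine Set.mem_iUnion.2 ⟨(n - N, i), ?_⟩
    have hnN : N + (n - N) = n := by omega
    have hcondh : cond N (n - N, i) := by
      rw [hcond]
      refine ⟨by simpa [hnN] using hilt, x, hxIcc, by simp [hnN, hi], k, ?_, ?_, hdig', ?_⟩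
      · simpa [hnN] using hk1
      · simpa [hnN] using hk2
      · rw [blockOf_eq n k hk1 hk2]
        exact (Nat.not_even_iff_odd).2 hodd
    rw [ht_def]
    simp only [hnN, if_pos hcondh]
    have hpM : (0:ℝ) < 2^(M n) := pow_pos (by norm_num) _
    constructor
    · apply F_mono
      rw [div_le_iff₀ hpM, hi, idx_eq_floor hxIcc.2]
      have h8 : ((⌊(2:ℝ)^(M n) * x⌋₊:ℝ)) ≤ 2^(M n) * x :=
        Nat.floor_le (mul_nonneg (pow_nonneg (by norm_num) _) hxIcc.1)
      linarith
    · apply F_mono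
      rw [le_div_iff₀ hpM, hi, idx_eq_floor hxIcc.2]
      have h8 : (2:ℝ)^(M n) * x < (⌊(2:ℝ)^(M n) * x⌋₊:ℝ) + 1 := Nat.lt_floor_add_one _
      linarith
  -- apply
  have hμ := MeasureTheory.Measure.hausdorffMeasure_le_liminf_tsum (d:ℝ)
    (F '' (Set.Icc (0:ℝ) 1 \ Cs)) r hr t
    (Filter.Eventually.of_forall hdiam') (Filter.Eventually.of_forall hst)
  -- sum bound
  have hsum : ∀ᶠ N in Filter.atTop,
      (∑' p : ℕ × ℕ, EMetric.diam (t N p) ^ (d:ℝ)) ≤ 2 * (2⁻¹:ℝ≥0∞)^N := by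
    filter_upwards [Filter.eventually_ge_atTop ⌈(2:ℝ)/d⌉₊] with N hN
    have hterm : ∀ m, (∑' i : ℕ, EMetric.diam (t N (m, i)) ^ (d:ℝ)) ≤ (2⁻¹:ℝ≥0∞)^(N+m) := by
      intro m
      have hb1 : ∀ i : ℕ, EMetric.diam (t N (m, i)) ^ (d:ℝ)
          ≤ if i < 2^(M (N+m)) then (ENNReal.ofReal (eta (N+m))) ^ (d:ℝ) else 0 := by
        intro i
        by_cases hc : cond N (m, i)
        · have hc1 : i + 1 ≤ 2^(M (N+m)) := by
            simp only [hcond] at hc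
            exact hc.1
          rw [if_pos (by omega)]
          exact ENNReal.rpow_le_rpow (hdiam N (m, i)) hd'.le
        · have : t N (m, i) = ∅ := by rw [ht_def]; simp only [if_neg hc]
          rw [this]
          simp only [EMetric.diam, EMetric.diam_empty]
          rw [ENNReal.zero_rpow_of_pos hd']
          exact zero_le
      calc (∑' i : ℕ, EMetric.diam (t N (m, i)) ^ (d:ℝ))
          ≤ ∑' i : ℕ, (if i < 2^(M (N+m)) then (ENNReal.ofReal (eta (N+m))) ^ (d:ℝ) else 0) :=
            ENNReal.tsum_le_tsum hb1
        _ = ∑ i ∈ Finset.range (2^(M (N+m))),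
              (if i < 2^(M (N+m)) then (ENNReal.ofReal (eta (N+m))) ^ (d:ℝ) else 0) := by
            apply tsum_eq_sum
            intro i hi
            rw [Finset.mem_range] at hi
            rw [if_neg (by omega)]
        _ = (2^(M (N+m)) : ℕ) * (ENNReal.ofReal (eta (N+m))) ^ (d:ℝ) := by
            rw [Finset.sum_congr rfl (fun i hi => by rw [if_pos (Finset.mem_range.1 hi)]),
              Finset.sum_const, Finset.card_range, nsmul_eq_mul]
        _ ≤ (2⁻¹:ℝ≥0∞)^(N+m) := by
            -- numeric step
            set n := N + m with hn
            have hq : n ≤ Nat.factorial (n+2) := le_trans (by omega) (Nat.self_le_factorial _)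
            have hnat : Kc (n+1) + n ≤ 2 * Nat.factorial (n+2) := by
              have h0 : Kc (n+1) + 1 = Nat.factorial (n+2) := by
                simp only [Kc, show n+1+1 = n+2 from rfl]
                have := Nat.factorial_pos (n+2)
                omega
              omega
            have hdq : (2:ℝ) ≤ d * Nat.factorial (n+2) := by
              have h1 : (2:ℝ)/d ≤ ⌈(2:ℝ)/d⌉₊ := Nat.le_ceil _
              have h2 : ((⌈(2:ℝ)/d⌉₊:ℝ)) ≤ N := by exact_mod_cast hN
              have h3 : (N:ℝ) ≤ Nat.factorial (n+2) := by
                have : N ≤ Nat.factorial (n+2) := le_trans (by omega) hq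
                exact_mod_cast this
              rw [div_le_iff₀ hd'] at h1
              nlinarith
            have hreal : (2:ℝ)^(Kc (n+1)) * ((2⁻¹:ℝ)^((Nat.factorial (n+2))^2))^(d:ℝ)
                ≤ (2⁻¹:ℝ)^n := by
              apply pow_ineq hd'
              have c1 : ((Kc (n+1) : ℝ)) + n ≤ 2 * (Nat.factorial (n+2):ℝ) := by
                exact_mod_cast hnat
              have c2 : (2:ℝ) * (Nat.factorial (n+2):ℝ)
                  ≤ d * ((Nat.factorial (n+2):ℝ) * (Nat.factorial (n+2):ℝ)) := by
                nlinarith [(Nat.cast_pos (α := ℝ)).2 (Nat.factorial_pos (n+2)), hdq]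
              push_cast
              nlinarith
            calc ((2^(M n) : ℕ) : ℝ≥0∞) * (ENNReal.ofReal (eta n)) ^ (d:ℝ)
                = ENNReal.ofReal ((2:ℝ)^(Kc (n+1)) *
                    ((2⁻¹:ℝ)^((Nat.factorial (n+2))^2))^(d:ℝ)) := by
                  rw [eta, ENNReal.ofReal_rpow_of_pos (by positivity),
                    ← ENNReal.ofReal_natCast (2^(M n)), ← ENNReal.ofReal_mul (by positivity)]
                  congr 2
                  push_cast
                  rw [hM]
              _ ≤ ENNReal.ofReal ((2⁻¹:ℝ)^n) := ENNReal.ofReal_le_ofReal hreal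
              _ = (2⁻¹:ℝ≥0∞)^n := ofReal_half_pow n
    calc (∑' p : ℕ × ℕ, EMetric.diam (t N p) ^ (d:ℝ))
        = ∑' m : ℕ, ∑' i : ℕ, EMetric.diam (t N (m, i)) ^ (d:ℝ) := ENNReal.tsum_prod'
      _ ≤ ∑' m : ℕ, (2⁻¹:ℝ≥0∞)^(N+m) := ENNReal.tsum_le_tsum hterm
      _ = 2 * (2⁻¹:ℝ≥0∞)^N := by
          rw [show (fun m : ℕ => (2⁻¹:ℝ≥0∞)^(N+m)) = fun m => (2⁻¹:ℝ≥0∞)^N * (2⁻¹:ℝ≥0∞)^m from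
            funext fun m => by rw [pow_add]]
          rw [ENNReal.tsum_mul_left, ENNReal.tsum_geometric]
          rw [ENNReal.one_sub_inv_two, inv_inv]
          ring
  have hlim : Filter.Tendsto (fun N : ℕ => 2 * (2⁻¹:ℝ≥0∞)^N) Filter.atTop (nhds 0) := by
    have := ENNReal.Tendsto.const_mul (a := (2:ℝ≥0∞)) half_pow_tendsto (Or.inr (by simp))
    simpa using this
  refine le_antisymm ?_ (zero_le)
  calc μH[(d:ℝ)] (F '' (Set.Icc (0:ℝ) 1 \ Cs)) ≤ _ := hμ
    _ ≤ Filter.liminf (fun N : ℕ => 2 * (2⁻¹:ℝ≥0∞)^N) Filter.atTop := Filter.liminf_le_liminf hsum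
    _ = 0 := hlim.liminf_eq

end

end S8

theorem stmt_8 :
    ∃ f : ℝ → ℝ, ∃ C : Set ℝ, C ⊆ Set.Icc (0 : ℝ) 1 ∧
      StrictMonoOn f (Set.Icc (0 : ℝ) 1) ∧ ContinuousOn f (Set.Icc (0 : ℝ) 1) ∧
      dimH C = 0 ∧ dimH (f '' (Set.Icc (0 : ℝ) 1 \ C)) = 0 := by
  exact ⟨S8.F, S8.Cs, S8.Cs_subset, S8.F_strictMonoOn, S8.F_continuousOn,
    S8.dimH_Cs, S8.dimH_image⟩
end
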